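/- arXiv:2510.19998 — 3 statements merged into one kernel-verified Lean document; each statement's English description precedes it below -/
import Mathlib

section
/- Let (X,d) be a Polish metric space, p ≥ 1, and let G be a topological group acting continuously on X by isometries. Then for every choice of μ, ν ∈ P_p(X), the map G → [0,∞), g ↦ W_p(g_#μ, ν), is continuous. -/
open MeasureTheory ENNReal Set
open Metric TopologicalSpace

noncomputable section

/-- The set of admissible couplings of two measures. -/
def Adm {X : Type*} [MeasurableSpace X] (μ ν : Measure X) : Set (Measure (X × X)) :=
  {π | IsProbabilityMeasure π ∧ π.map Prod.fst = μ ∧ π.map Prod.snd = ν}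

/-- The `p`-th Wasserstein distance. -/
def Wp {X : Type*} [MeasurableSpace X] [PseudoEMetricSpace X] (p : ℝ) (μ ν : Measure X) :
    ℝ≥0∞ :=
  (⨅ π ∈ Adm μ ν, ∫⁻ z : X × X, edist z.1 z.2 ^ p ∂π) ^ (1 / p)

/-- Finite `p`-th moment. -/
def HasFinitePMoment {X : Type*} [MeasurableSpace X] [PseudoEMetricSpace X] (p : ℝ)
    (μ : Measure X) : Prop :=
  ∃ x₀ : X, ∫⁻ x, edist x x₀ ^ p ∂μ ≠ ⊤

/-- Tightness of finite measures on complete separable metric spaces. -/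
lemma exists_compact_tail {X : Type*} [MetricSpace X] [CompleteSpace X]
    [TopologicalSpace.SeparableSpace X] [MeasurableSpace X] [OpensMeasurableSpace X]
    (ρ : Measure X) [IsFiniteMeasure ρ] {ε : ℝ≥0∞} (hε : 0 < ε) :
    ∃ K : Set X, IsCompact K ∧ ρ Kᶜ ≤ ε := by
  rcases isEmpty_or_nonempty X with hX | hX
  · refine ⟨∅, isCompact_empty, ?_⟩
    have : (∅ : Set X)ᶜ = (∅ : Set X) := by
      ext x; exact (IsEmpty.false x).elim
    simp [this]
  set u : ℕ → X := TopologicalSpace.denseSeq X with hu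
  have hdense : DenseRange u := TopologicalSpace.denseRange_denseSeq X
  have key : ∀ m : ℕ, ∃ N : ℕ,
      ρ ((⋃ n ∈ Finset.range N, closedBall (u n) (1 / (m + 1)))ᶜ) ≤ ε / 2 ^ (m + 1) := by
    intro m
    set ε' : ℝ≥0∞ := ε / 2 ^ (m + 1) with hε'
    rcases eq_or_ne ε' ⊤ with htop | htop
    · exact ⟨0, by simp [htop]⟩
    have hpos : 0 < ε' := ENNReal.div_pos hε.ne' (by simp)
    set S : ℕ → Set X := fun N => ⋃ n ∈ Finset.range N, closedBall (u n) (1 / (m + 1)) with hS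
    have hSmeas : ∀ N, MeasurableSet (S N) := fun N =>
      (Finset.range N).measurableSet_biUnion (fun n _ => measurableSet_closedBall)
    have hmono : Monotone S := by
      intro a b hab x hx
      simp only [hS, mem_iUnion, Finset.mem_range] at hx ⊢
      obtain ⟨n, hn, hxn⟩ := hx
      exact ⟨n, lt_of_lt_of_le hn hab, hxn⟩
    have hunion : ⋃ N, S N = univ := by
      apply eq_univ_of_forall
      intro x
      obtain ⟨n, hn⟩ := Metric.denseRange_iff.mp hdense x (1 / (m + 1)) (by positivity)
      refine mem_iUnion.mpr ⟨n + 1, ?_⟩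
      simp only [hS, mem_iUnion, Finset.mem_range]
      exact ⟨n, Nat.lt_succ_self n, by rw [mem_closedBall]; exact hn.le⟩
    have htend : Filter.Tendsto (fun N => ρ (S N)) Filter.atTop (nhds (ρ univ)) := by
      have := tendsto_measure_iUnion_atTop (μ := ρ) hmono
      rwa [hunion] at this
    have hlt : ρ univ < ρ univ + ε' := ENNReal.lt_add_right (measure_ne_top ρ univ) hpos.ne'
    have hev : ∀ᶠ N in Filter.atTop, ρ univ < ρ (S N) + ε' :=
      (htend.add_const ε').eventually_const_lt hlt
    obtain ⟨N, hN⟩ := hev.exists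
    refine ⟨N, ?_⟩
    rw [measure_compl (hSmeas N) (measure_ne_top _ _)]
    exact tsub_le_iff_left.mpr hN.le
  choose N hN using key
  set K : Set X := ⋂ m, ⋃ n ∈ Finset.range (N m), closedBall (u n) (1 / (m + 1)) with hK
  have hKclosed : IsClosed K :=
    isClosed_iInter fun m => isClosed_biUnion_finset (fun n _ => isClosed_closedBall)
  have hKtb : TotallyBounded K := by
    rw [Metric.totallyBounded_iff]
    intro δ hδ
    obtain ⟨m, hm⟩ := exists_nat_one_div_lt hδ
    refine ⟨u '' (Finset.range (N m) : Set ℕ), (Set.toFinite _).image u, ?_⟩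
    intro x hx
    have hx' : x ∈ ⋃ n ∈ Finset.range (N m), closedBall (u n) (1 / (m + 1)) :=
      mem_iInter.mp hx m
    simp only [mem_iUnion, Finset.mem_range] at hx'
    obtain ⟨n, hn, hxn⟩ := hx'
    refine mem_biUnion ⟨n, by simpa using hn, rfl⟩ ?_
    rw [mem_ball]
    exact lt_of_le_of_lt (by simpa using hxn) hm
  have hKcompact : IsCompact K := TotallyBounded.isCompact_of_isClosed hKtb hKclosed
  refine ⟨K, hKcompact, ?_⟩
  have hcompl : Kᶜ = ⋃ m, (⋃ n ∈ Finset.range (N m), closedBall (u n) (1 / (m + 1)))ᶜ := by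
    rw [hK, Set.compl_iInter]
  calc ρ Kᶜ ≤ ∑' m, ρ ((⋃ n ∈ Finset.range (N m), closedBall (u n) (1 / (m + 1)))ᶜ) := by
        rw [hcompl]; exact measure_iUnion_le _
    _ ≤ ∑' m : ℕ, ε / 2 ^ (m + 1) := ENNReal.tsum_le_tsum hN
    _ = ε := by
        have : ∀ m : ℕ, ε / 2 ^ (m + 1) = ε * 2⁻¹ ^ (m + 1) := by
          intro m
          rw [div_eq_mul_inv, ENNReal.inv_pow]
        simp_rw [this]
        rw [ENNReal.tsum_mul_left, ENNReal.tsum_geometric_add_one, ENNReal.one_sub_inv_two,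
          ENNReal.mul_inv_cancel (by norm_num) (by norm_num), mul_one]

lemma wp_map_le {X : Type*} [MeasurableSpace X] [MetricSpace X] [BorelSpace X]
    [SecondCountableTopology X]
    {p : ℝ} (hp : 1 ≤ p) (μ₁ ν : Measure X) {φ : X → X} (hφ : Measurable φ) :
    Wp p (μ₁.map φ) ν ≤ Wp p μ₁ ν + (∫⁻ x, edist (φ x) x ^ p ∂μ₁) ^ (1 / p) := by
  have hp0 : (0 : ℝ) < p := lt_of_lt_of_le one_pos hp
  have h1p : (0 : ℝ) < 1 / p := by positivity
  set C := (∫⁻ x, edist (φ x) x ^ p ∂μ₁) ^ (1 / p) with hC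
  have hedist_meas : Measurable (fun z : X × X => edist z.1 z.2 ^ p) :=
    (measurable_edist).pow_const p
  have hf_meas : Measurable (fun z : X × X => edist (φ z.1) z.1) :=
    Measurable.edist (hφ.comp measurable_fst) measurable_fst
  have hg_meas : Measurable (fun z : X × X => edist z.1 z.2) := measurable_edist
  have key : ∀ π ∈ Adm μ₁ ν,
      Wp p (μ₁.map φ) ν ≤ (∫⁻ z : X × X, edist z.1 z.2 ^ p ∂π) ^ (1 / p) + C := by
    intro π hπ
    obtain ⟨hπprob, hfst, hsnd⟩ := hπ
    set T : X × X → X × X := fun z => (φ z.1, z.2) with hT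
    have hTmeas : Measurable T := (hφ.comp measurable_fst).prodMk measurable_snd
    have hmem : π.map T ∈ Adm (μ₁.map φ) ν := by
      refine ⟨Measure.isProbabilityMeasure_map hTmeas.aemeasurable, ?_, ?_⟩
      · rw [Measure.map_map measurable_fst hTmeas]
        have h1 : (Prod.fst ∘ T) = φ ∘ Prod.fst := rfl
        rw [h1, ← Measure.map_map hφ measurable_fst, hfst]
      · rw [Measure.map_map measurable_snd hTmeas]
        have h2 : (Prod.snd ∘ T) = Prod.snd := rfl
        rw [h2, hsnd]
    have hWple : Wp p (μ₁.map φ) ν ≤ (∫⁻ z : X × X, edist z.1 z.2 ^ p ∂(π.map T)) ^ (1 / p) :=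
      ENNReal.rpow_le_rpow (iInf₂_le _ hmem) h1p.le
    have hcost : ∫⁻ z : X × X, edist z.1 z.2 ^ p ∂(π.map T)
        = ∫⁻ z : X × X, edist (φ z.1) z.2 ^ p ∂π := by
      rw [lintegral_map hedist_meas hTmeas]
    have hmink : (∫⁻ z : X × X, edist (φ z.1) z.2 ^ p ∂π) ^ (1 / p)
        ≤ C + (∫⁻ z : X × X, edist z.1 z.2 ^ p ∂π) ^ (1 / p) := by
      have hpt : (∫⁻ z : X × X, edist (φ z.1) z.2 ^ p ∂π)
          ≤ ∫⁻ z : X × X,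
              ((fun z : X × X => edist (φ z.1) z.1) + fun z : X × X => edist z.1 z.2) z ^ p ∂π := by
        apply lintegral_mono
        intro z
        apply ENNReal.rpow_le_rpow _ hp0.le
        calc edist (φ z.1) z.2 ≤ edist (φ z.1) z.1 + edist z.1 z.2 := edist_triangle _ _ _
        _ = _ := rfl
      have hLp := ENNReal.lintegral_Lp_add_le (μ := π)
        hf_meas.aemeasurable hg_meas.aemeasurable hp
      have hfint : ∫⁻ z : X × X, edist (φ z.1) z.1 ^ p ∂π = ∫⁻ x, edist (φ x) x ^ p ∂μ₁ := by
        rw [← hfst, lintegral_map ((Measurable.edist hφ measurable_id').pow_const p) measurable_fst]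
      calc (∫⁻ z : X × X, edist (φ z.1) z.2 ^ p ∂π) ^ (1 / p)
          ≤ (∫⁻ z : X × X,
              ((fun z : X × X => edist (φ z.1) z.1) + fun z : X × X => edist z.1 z.2) z ^ p ∂π)
              ^ (1 / p) := ENNReal.rpow_le_rpow hpt h1p.le
        _ ≤ (∫⁻ z : X × X, edist (φ z.1) z.1 ^ p ∂π) ^ (1 / p)
            + (∫⁻ z : X × X, edist z.1 z.2 ^ p ∂π) ^ (1 / p) := hLp
        _ = C + (∫⁻ z : X × X, edist z.1 z.2 ^ p ∂π) ^ (1 / p) := by rw [hC, hfint]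
    calc Wp p (μ₁.map φ) ν ≤ (∫⁻ z : X × X, edist z.1 z.2 ^ p ∂(π.map T)) ^ (1 / p) := hWple
      _ = (∫⁻ z : X × X, edist (φ z.1) z.2 ^ p ∂π) ^ (1 / p) := by rw [hcost]
      _ ≤ C + (∫⁻ z : X × X, edist z.1 z.2 ^ p ∂π) ^ (1 / p) := hmink
      _ = (∫⁻ z : X × X, edist z.1 z.2 ^ p ∂π) ^ (1 / p) + C := add_comm _ _
  have hiInf : Wp p μ₁ ν = ⨅ π ∈ Adm μ₁ ν, (∫⁻ z : X × X, edist z.1 z.2 ^ p ∂π) ^ (1 / p) := by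
    rw [Wp]
    exact map_iInf₂ (ENNReal.orderIsoRpow (1 / p) h1p) _
  rw [hiInf, ENNReal.iInf_add]
  refine le_iInf fun π => ?_
  rw [ENNReal.iInf_add]
  exact le_iInf fun hπ => key π hπ

lemma ennreal_add_rpow_le {a b : ℝ≥0∞} {p : ℝ} (hp : 0 ≤ p) :
    (a + b) ^ p ≤ 2 ^ p * (a ^ p + b ^ p) := by
  have h1 : a + b ≤ 2 * max a b := by
    rcases le_total a b with hab | hab
    · rw [max_eq_right hab, two_mul]; exact add_le_add_left hab b
    · rw [max_eq_left hab, two_mul]; exact add_le_add_right hab a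
  calc (a + b) ^ p ≤ (2 * max a b) ^ p := ENNReal.rpow_le_rpow h1 hp
    _ = 2 ^ p * (max a b) ^ p := ENNReal.mul_rpow_of_nonneg _ _ hp
    _ ≤ 2 ^ p * (a ^ p + b ^ p) := by
        apply mul_le_mul_right
        rcases le_total a b with hab | hab
        · rw [max_eq_right hab]; exact le_add_self
        · rw [max_eq_left hab]; exact le_add_right le_rfl

/-- Let `X` be a Polish metric space, `p ≥ 1`, and `G` a topological group acting
continuously on `X` by isometries. Then for every `μ, ν ∈ P_p(X)` the map
`g ↦ W_p(g_#μ, ν)` is continuous on `G`. -/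
theorem wasserstein_distance_continuous_in_group {X : Type*} [MetricSpace X] [CompleteSpace X]
    [TopologicalSpace.SeparableSpace X] [MeasurableSpace X] [BorelSpace X]
    (G : Type*) [Group G] [TopologicalSpace G] [IsTopologicalGroup G]
    [MulAction G X] [ContinuousSMul G X]
    (hiso : ∀ g : G, Isometry (fun x : X => g • x))
    (p : ℝ) (hp : 1 ≤ p)
    (μ ν : Measure X)
    (hμ : IsProbabilityMeasure μ) (hμp : HasFinitePMoment p μ)
    (hν : IsProbabilityMeasure ν) (hνp : HasFinitePMoment p ν) :
    Continuous (fun g : G => Wp p (μ.map (fun x : X => g • x)) ν) := by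
  haveI : SecondCountableTopology X := UniformSpace.secondCountable_of_separable X
  obtain ⟨x₀, hx₀⟩ := hμp
  have hp0 : (0 : ℝ) < p := lt_of_lt_of_le one_pos hp
  have h1p : (0 : ℝ) < 1 / p := by positivity
  set F : G → ℝ≥0∞ := fun g => Wp p (μ.map (fun x : X => g • x)) ν with hF
  set C : G → G → ℝ≥0∞ :=
    fun g h => (∫⁻ x, edist (g • x) (h • x) ^ p ∂μ) ^ (1 / p) with hCdef
  have hsmul_meas : ∀ g : G, Measurable (fun x : X => g • x) := fun g =>
    (continuous_const_smul g).measurable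
  have hint_meas : ∀ g h : G, Measurable (fun x : X => edist (g • x) (h • x) ^ p) := by
    intro g h
    exact (Measurable.edist (hsmul_meas g) (hsmul_meas h)).pow_const p
  -- the basic Lipschitz-type bound
  have hFle : ∀ g h : G, F g ≤ F h + C g h := by
    intro g h
    have key := wp_map_le hp (μ.map (fun x : X => h • x)) ν (hsmul_meas (g * h⁻¹))
    have hmap : (μ.map (fun x : X => h • x)).map (fun x : X => (g * h⁻¹) • x)
        = μ.map (fun x : X => g • x) := by
      rw [Measure.map_map (hsmul_meas _) (hsmul_meas _)]
      congr 1
      funext x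
      show (g * h⁻¹) • (h • x) = g • x
      rw [← mul_smul]
      congr 1
      group
    have hint : (∫⁻ x, edist ((g * h⁻¹) • x) x ^ p ∂(μ.map (fun x : X => h • x)))
        = ∫⁻ x, edist (g • x) (h • x) ^ p ∂μ := by
      have hm : Measurable fun x : X => edist ((g * h⁻¹) • x) x ^ p :=
        (Measurable.edist (hsmul_meas (g * h⁻¹)) measurable_id').pow_const p
      rw [lintegral_map hm (hsmul_meas h)]
      · congr 1
        funext x
        have h1 : (g * h⁻¹) • (h • x) = g • x := by
          rw [← mul_smul]; congr 1; group
        rw [h1]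
    rw [hmap] at key
    calc F g ≤ F h + (∫⁻ x, edist ((g * h⁻¹) • x) x ^ p ∂(μ.map (fun x : X => h • x))) ^ (1 / p) := key
      _ = F h + C g h := by rw [hint]
  have hCsymm : ∀ g h : G, C h g = C g h := by
    intro g h
    simp only [hCdef]
    congr 1
    congr 1
    funext x
    rw [edist_comm]
  -- smallness of C near the diagonal
  have hC_small : ∀ h : G, ∀ ε : ℝ≥0∞, 0 < ε → ∀ᶠ g in nhds h, C g h ≤ ε := by
    intro h ε hε
    suffices hI : ∀ δ : ℝ≥0∞, 0 < δ →
        ∀ᶠ g in nhds h, (∫⁻ x, edist (g • x) (h • x) ^ p ∂μ) ≤ δ by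
      have hεp : 0 < ε ^ p := by
        rw [pos_iff_ne_zero]
        intro h0
        rcases ENNReal.rpow_eq_zero_iff.mp h0 with ⟨h1, _⟩ | ⟨_, h2⟩
        · exact hε.ne' h1
        · linarith
      filter_upwards [hI (ε ^ p) hεp] with g hg
      calc C g h ≤ (ε ^ p) ^ (1 / p) := ENNReal.rpow_le_rpow hg h1p.le
        _ = ε := by
          rw [← ENNReal.rpow_mul, mul_one_div_cancel hp0.ne', ENNReal.rpow_one]
    intro δ hδ
    have hδ3 : (0 : ℝ≥0∞) < δ / 3 := ENNReal.div_pos hδ.ne' (by norm_num)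
    -- finite measure with density `edist x x₀ ^ p`
    set f : X → ℝ≥0∞ := fun x => edist x x₀ ^ p with hfdef
    have hfmeas : Measurable f := (measurable_edist.comp
      (measurable_id.prodMk measurable_const)).pow_const p
    set ρ : Measure X := μ.withDensity f with hρdef
    haveI : IsFiniteMeasure ρ := isFiniteMeasure_withDensity hx₀
    have h4p_ne_top : ((4 : ℝ≥0∞) ^ p) ≠ ⊤ := by
      exact ENNReal.rpow_ne_top_of_nonneg hp0.le (by norm_num)
    have h4p_ne_zero : ((4 : ℝ≥0∞) ^ p) ≠ 0 := by
      intro h0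
      rcases ENNReal.rpow_eq_zero_iff.mp h0 with ⟨h1, _⟩ | ⟨h2, _⟩
      · norm_num at h1
      · norm_num at h2
    have h2p_ne_top : ((2 : ℝ≥0∞) ^ p) ≠ ⊤ :=
      ENNReal.rpow_ne_top_of_nonneg hp0.le (by norm_num)
    have h2p_ne_zero : ((2 : ℝ≥0∞) ^ p) ≠ 0 := by
      intro h0
      rcases ENNReal.rpow_eq_zero_iff.mp h0 with ⟨h1, _⟩ | ⟨h2, _⟩
      · norm_num at h1
      · norm_num at h2
    obtain ⟨K, hKcomp, hKtail⟩ := exists_compact_tail ρ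
      (ε := δ / 3 / 4 ^ p) (ENNReal.div_pos hδ3.ne' h4p_ne_top)
    have hKmeas : MeasurableSet K := hKcomp.measurableSet
    -- small parameters
    have hmin_pos : (0 : ℝ≥0∞) < min (δ / 3) 1 := lt_min hδ3 one_pos
    have hmin_ne_top : min (δ / 3) 1 ≠ ⊤ := by
      intro h0
      have := min_le_right (δ / 3) 1
      rw [h0] at this
      exact (lt_irrefl _ (lt_of_le_of_lt this (by norm_num))).elim
    set η : ℝ≥0∞ := (min (δ / 3) 1) ^ (1 / p) with hηdef
    have hη0 : 0 < η := by
      rw [hηdef, pos_iff_ne_zero]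
      intro h0
      rcases ENNReal.rpow_eq_zero_iff.mp h0 with ⟨h1, _⟩ | ⟨_, h2⟩
      · exact hmin_pos.ne' h1
      · linarith
    have hηtop : η ≠ ⊤ := by
      rw [hηdef]
      exact ENNReal.rpow_ne_top_of_nonneg h1p.le hmin_ne_top
    have hηp : η ^ p ≤ δ / 3 := by
      rw [hηdef, ← ENNReal.rpow_mul, one_div_mul_cancel hp0.ne', ENNReal.rpow_one]
      exact min_le_left _ _
    set θ : ℝ≥0∞ := (min (δ / 3) 1 / 2 ^ p) ^ (1 / p) with hθdef
    have hθbase_pos : (0 : ℝ≥0∞) < min (δ / 3) 1 / 2 ^ p :=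
      ENNReal.div_pos hmin_pos.ne' h2p_ne_top
    have hθbase_ne_top : min (δ / 3) 1 / 2 ^ p ≠ ⊤ := by
      exact (ENNReal.div_lt_top hmin_ne_top h2p_ne_zero).ne
    have hθ0 : 0 < θ := by
      rw [hθdef, pos_iff_ne_zero]
      intro h0
      rcases ENNReal.rpow_eq_zero_iff.mp h0 with ⟨h1, _⟩ | ⟨_, h2⟩
      · exact hθbase_pos.ne' h1
      · linarith
    have hθtop : θ ≠ ⊤ := by
      rw [hθdef]
      exact ENNReal.rpow_ne_top_of_nonneg h1p.le hθbase_ne_top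
    have hθp : 2 ^ p * θ ^ p ≤ δ / 3 := by
      rw [hθdef, ← ENNReal.rpow_mul, one_div_mul_cancel hp0.ne', ENNReal.rpow_one]
      rw [ENNReal.mul_div_cancel h2p_ne_zero h2p_ne_top]
      exact min_le_left _ _
    -- tube lemma
    set V : Set (G × X) := {q : G × X | dist (q.1 • q.2) (h • q.2) < η.toReal} with hVdef
    have hVopen : IsOpen V := by
      apply isOpen_lt _ continuous_const
      exact Continuous.dist (continuous_fst.smul continuous_snd)
        (continuous_const.smul continuous_snd)
    have hsub : ({h} : Set G) ×ˢ K ⊆ V := by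
      rintro ⟨g, x⟩ ⟨hg, hx⟩
      simp only [mem_singleton_iff] at hg
      subst hg
      simp only [hVdef, mem_setOf_eq, dist_self]
      exact ENNReal.toReal_pos hη0.ne' hηtop
    obtain ⟨U, W, hUopen, hWopen, hhU, hKW, hUW⟩ :=
      generalized_tube_lemma isCompact_singleton hKcomp hVopen hsub
    -- neighborhood from θ
    have hcont : Continuous fun g : G => dist (g • x₀) (h • x₀) :=
      Continuous.dist (continuous_id.smul continuous_const) continuous_const
    have hθnbhd : {g : G | dist (g • x₀) (h • x₀) < θ.toReal} ∈ nhds h := by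
      apply (isOpen_lt hcont continuous_const).mem_nhds
      simp only [mem_setOf_eq, dist_self]
      exact ENNReal.toReal_pos hθ0.ne' hθtop
    have hUnbhd : U ∈ nhds h := hUopen.mem_nhds (hhU rfl)
    filter_upwards [hUnbhd, hθnbhd] with g hgU hgθ
    -- now the estimate
    have hdgh : edist (g • x₀) (h • x₀) ≤ θ := by
      rw [edist_dist]
      calc ENNReal.ofReal (dist (g • x₀) (h • x₀)) ≤ ENNReal.ofReal θ.toReal :=
            ENNReal.ofReal_le_ofReal hgθ.le
        _ = θ := ENNReal.ofReal_toReal hθtop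
    have hbK : ∫⁻ x in K, edist (g • x) (h • x) ^ p ∂μ ≤ δ / 3 := by
      have hptK : ∀ x ∈ K, edist (g • x) (h • x) ^ p ≤ η ^ p := by
        intro x hx
        apply ENNReal.rpow_le_rpow _ hp0.le
        have hgx : dist (g • x) (h • x) < η.toReal := hUW (Set.mk_mem_prod hgU (hKW hx))
        rw [edist_dist]
        calc ENNReal.ofReal (dist (g • x) (h • x)) ≤ ENNReal.ofReal η.toReal :=
              ENNReal.ofReal_le_ofReal hgx.le
          _ = η := ENNReal.ofReal_toReal hηtop
      calc ∫⁻ x in K, edist (g • x) (h • x) ^ p ∂μ ≤ ∫⁻ _ in K, η ^ p ∂μ :=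
            setLIntegral_mono measurable_const hptK
        _ = η ^ p * μ K := setLIntegral_const K _
        _ ≤ η ^ p * 1 := mul_le_mul_right prob_le_one _
        _ = η ^ p := mul_one _
        _ ≤ δ / 3 := hηp
    have hbKc : ∫⁻ x in Kᶜ, edist (g • x) (h • x) ^ p ∂μ ≤ δ / 3 + δ / 3 := by
      have hpt : ∀ x : X, edist (g • x) (h • x) ^ p
          ≤ 4 ^ p * f x + 2 ^ p * edist (g • x₀) (h • x₀) ^ p := by
        intro x
        have e1 : edist (g • x) (g • x₀) = edist x x₀ := hiso g x x₀
        have e2 : edist (h • x₀) (h • x) = edist x₀ x := hiso h x₀ x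
        have htri : edist (g • x) (h • x) ≤ 2 * edist x x₀ + edist (g • x₀) (h • x₀) := by
          calc edist (g • x) (h • x)
              ≤ edist (g • x) (g • x₀) + edist (g • x₀) (h • x₀) + edist (h • x₀) (h • x) :=
                edist_triangle4 _ _ _ _
            _ = edist x x₀ + edist (g • x₀) (h • x₀) + edist x₀ x := by rw [e1, e2]
            _ = 2 * edist x x₀ + edist (g • x₀) (h • x₀) := by
                rw [edist_comm x₀ x, two_mul]; ring
        calc edist (g • x) (h • x) ^ p
            ≤ (2 * edist x x₀ + edist (g • x₀) (h • x₀)) ^ p :=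
              ENNReal.rpow_le_rpow htri hp0.le
          _ ≤ 2 ^ p * ((2 * edist x x₀) ^ p + edist (g • x₀) (h • x₀) ^ p) :=
              ennreal_add_rpow_le hp0.le
          _ = 4 ^ p * f x + 2 ^ p * edist (g • x₀) (h • x₀) ^ p := by
              rw [ENNReal.mul_rpow_of_nonneg _ _ hp0.le, mul_add, ← mul_assoc,
                ← ENNReal.mul_rpow_of_nonneg _ _ hp0.le]
              norm_num
              rfl
      calc ∫⁻ x in Kᶜ, edist (g • x) (h • x) ^ p ∂μ
          ≤ ∫⁻ x in Kᶜ, (4 ^ p * f x + 2 ^ p * edist (g • x₀) (h • x₀) ^ p) ∂μ :=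
            setLIntegral_mono ((hfmeas.const_mul _).add measurable_const)
              (fun x _ => hpt x)
        _ = 4 ^ p * ∫⁻ x in Kᶜ, f x ∂μ
            + 2 ^ p * edist (g • x₀) (h • x₀) ^ p * μ Kᶜ := by
            rw [lintegral_add_right _ measurable_const, lintegral_const_mul _ hfmeas,
              setLIntegral_const]
        _ ≤ 4 ^ p * (δ / 3 / 4 ^ p) + 2 ^ p * θ ^ p * 1 := by
            apply add_le_add
            · apply mul_le_mul_right
              have : ∫⁻ x in Kᶜ, f x ∂μ = ρ Kᶜ := (withDensity_apply f hKmeas.compl).symm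
              rw [this]
              exact hKtail
            · apply mul_le_mul
              · exact mul_le_mul_right (ENNReal.rpow_le_rpow hdgh hp0.le) _
              · exact prob_le_one
              · exact zero_le'
              · exact zero_le'
        _ ≤ δ / 3 + δ / 3 := by
            apply add_le_add
            · rw [ENNReal.mul_div_cancel h4p_ne_zero h4p_ne_top]
            · rw [mul_one]; exact hθp
    calc (∫⁻ x, edist (g • x) (h • x) ^ p ∂μ)
        = ∫⁻ x in K, edist (g • x) (h • x) ^ p ∂μ
          + ∫⁻ x in Kᶜ, edist (g • x) (h • x) ^ p ∂μ :=
          (lintegral_add_compl _ hKmeas).symm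
      _ ≤ δ / 3 + (δ / 3 + δ / 3) := add_le_add hbK hbKc
      _ = δ / 3 + δ / 3 + δ / 3 := by rw [add_assoc]
      _ ≤ δ := by
          rcases eq_or_ne δ ⊤ with h0 | h0
          · rw [h0]; exact le_top
          · rw [ENNReal.add_thirds]
  -- conclude continuity
  rw [continuous_iff_continuousAt]
  intro h
  rcases eq_or_ne (F h) ⊤ with htop | htop
  · have hev : ∀ᶠ g in nhds h, F g = ⊤ := by
      filter_upwards [hC_small h 1 one_pos] with g hg
      by_contra hne
      have hle : F h ≤ F g + C h g := hFle h g
      rw [hCsymm g h] at hle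
      have : F h ≤ F g + 1 := le_trans hle (add_le_add_right hg _)
      rw [htop] at this
      exact (ENNReal.add_ne_top.mpr ⟨hne, ENNReal.one_ne_top⟩)
        (top_le_iff.mp this)
    show Filter.Tendsto F (nhds h) (nhds (F h))
    rw [htop]
    exact Filter.Tendsto.congr' (hev.mono fun g hg => hg.symm) tendsto_const_nhds
  · show Filter.Tendsto F (nhds h) (nhds (F h))
    rw [ENNReal.tendsto_nhds htop]
    intro ε hε
    filter_upwards [hC_small h ε hε] with g hg
    constructor
    · have hle : F h ≤ F g + C h g := hFle h g
      rw [hCsymm g h] at hle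
      exact tsub_le_iff_right.mpr (le_trans hle (add_le_add_right hg _))
    · exact le_trans (hFle g h) (add_le_add_right hg _)

end
end

section
/- Let (X,d) be a proper Polish metric space (every closed bounded subset of X is compact), p ≥ 1, and let G be a topological group acting on X by isometries such that the action is continuous and proper. Then for every μ, ν ∈ P_p(X) there exists g₀ ∈ G attaining the infimum: W_p((g₀)_#μ, ν) = inf_{g ∈ G} W_p(g_#μ, ν). -/
open MeasureTheory ENNReal Set NNReal Filter Topology

set_option linter.unusedSectionVars false

noncomputable section

lemma aux_iInf_rpow {ι : Sort*} (f : ι → ℝ≥0∞) {c : ℝ} (hc : 0 < c) :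
    (⨅ i, f i) ^ c = ⨅ i, f i ^ c :=
  (ENNReal.orderIsoRpow c hc).map_iInf f

lemma aux_sup_rpow (a b : ℝ≥0∞) {c : ℝ} (hc : 0 ≤ c) : (a ⊔ b) ^ c = a ^ c ⊔ b ^ c :=
  Monotone.map_sup (fun _ _ h => ENNReal.rpow_le_rpow h hc) a b

lemma aux_add2_rpow (a b : ℝ≥0∞) {p : ℝ} (hp : 0 ≤ p) :
    (a + b) ^ p ≤ 2 ^ p * (a ^ p + b ^ p) := by
  calc (a + b) ^ p ≤ (2 * (a ⊔ b)) ^ p := by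
        apply ENNReal.rpow_le_rpow _ hp
        rw [two_mul]
        exact add_le_add le_sup_left le_sup_right
    _ = 2 ^ p * (a ⊔ b) ^ p := ENNReal.mul_rpow_of_nonneg _ _ hp
    _ ≤ 2 ^ p * (a ^ p + b ^ p) := by
        rw [aux_sup_rpow a b hp]
        exact mul_le_mul_right (sup_le le_self_add le_add_self) _

lemma aux_add3_rpow (a b c : ℝ≥0∞) {p : ℝ} (hp : 0 ≤ p) :
    (a + b + c) ^ p ≤ 2 ^ p * (2 ^ p * (a ^ p + b ^ p) + c ^ p) :=
  calc (a + b + c) ^ p ≤ 2 ^ p * ((a + b) ^ p + c ^ p) := aux_add2_rpow _ _ hp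
    _ ≤ 2 ^ p * (2 ^ p * (a ^ p + b ^ p) + c ^ p) :=
        mul_le_mul_right (add_le_add_left (aux_add2_rpow _ _ hp) _) _

lemma aux_half_facts₁ : ((1/4 : ℝ≥0):ℝ≥0∞) + ((1/4 : ℝ≥0):ℝ≥0∞) = ((1/2 : ℝ≥0):ℝ≥0∞) := by
  rw [← ENNReal.coe_add, ENNReal.coe_inj, ← NNReal.coe_inj]
  push_cast; norm_num

lemma aux_half_facts₂ : (1:ℝ≥0∞) - ((3/4:ℝ≥0):ℝ≥0∞) ≤ ((1/4:ℝ≥0):ℝ≥0∞) := by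
  rw [← ENNReal.coe_one, ← ENNReal.coe_sub, ENNReal.coe_le_coe, ← NNReal.coe_le_coe,
    NNReal.coe_sub (by rw [← NNReal.coe_le_coe]; push_cast; norm_num)]
  push_cast; norm_num

lemma aux_half_facts₃ (a : ℝ≥0∞) (h : 1 ≤ a + ((1/2:ℝ≥0):ℝ≥0∞)) : ((1/2:ℝ≥0):ℝ≥0∞) ≤ a := by
  have h2 := tsub_le_iff_right.mpr h
  have h3 : (1:ℝ≥0∞) - ((1/2:ℝ≥0):ℝ≥0∞) = ((1/2:ℝ≥0):ℝ≥0∞) := by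
    rw [← ENNReal.coe_one, ← ENNReal.coe_sub, ENNReal.coe_inj, ← NNReal.coe_inj,
      NNReal.coe_sub (by rw [← NNReal.coe_le_coe]; push_cast; norm_num)]
    push_cast; norm_num
  rwa [h3] at h2

lemma aux_two_halves : (2:ℝ≥0∞) * ((1/2:ℝ≥0):ℝ≥0∞) = 1 := by
  rw [(by norm_cast : (2:ℝ≥0∞) = ((2:ℝ≥0):ℝ≥0∞)), ← ENNReal.coe_mul, ← ENNReal.coe_one,
    ENNReal.coe_inj, ← NNReal.coe_inj]
  push_cast; norm_num

lemma aux_half_lt_one : ((3/4:ℝ≥0):ℝ≥0∞) < 1 := by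
  rw [← ENNReal.coe_one, ENNReal.coe_lt_coe, ← NNReal.coe_lt_coe]
  push_cast; norm_num

section X

variable {X : Type*} [MeasurableSpace X] [MetricSpace X] [BorelSpace X]
  [SecondCountableTopology X]

lemma measurable_ecost {p : ℝ} : Measurable (fun z : X × X => edist z.1 z.2 ^ p) :=
  (measurable_fst.edist measurable_snd).pow measurable_const

lemma lintegral_fst' {π : Measure (X × X)} {μ : Measure X} (h : π.map Prod.fst = μ)
    {f : X → ℝ≥0∞} (hf : Measurable f) : ∫⁻ z : X × X, f z.1 ∂π = ∫⁻ x, f x ∂μ := by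
  rw [← h, lintegral_map hf measurable_fst]

lemma lintegral_snd' {π : Measure (X × X)} {ν : Measure X} (h : π.map Prod.snd = ν)
    {f : X → ℝ≥0∞} (hf : Measurable f) : ∫⁻ z : X × X, f z.2 ∂π = ∫⁻ x, f x ∂ν := by
  rw [← h, lintegral_map hf measurable_snd]

lemma adm_prod (μ ν : Measure X) [IsProbabilityMeasure μ] [IsProbabilityMeasure ν] :
    μ.prod ν ∈ Adm μ ν := by
  refine ⟨inferInstance, ?_, ?_⟩
  · simp [Measure.map_fst_prod]
  · simp [Measure.map_snd_prod]

lemma Wp_le_coupling {μ ν : Measure X} {π : Measure (X × X)} (hπ : π ∈ Adm μ ν) {p : ℝ}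
    (hp : 0 ≤ p) :
    Wp p μ ν ≤ (∫⁻ z : X × X, edist z.1 z.2 ^ p ∂π) ^ (1 / p) :=
  ENNReal.rpow_le_rpow (biInf_le _ hπ) (one_div_nonneg.mpr hp)

lemma Wp_eq_iInf {μ ν : Measure X} {p : ℝ} (hp : 0 < p) :
    Wp p μ ν = ⨅ π ∈ Adm μ ν, (∫⁻ z : X × X, edist z.1 z.2 ^ p ∂π) ^ (1 / p) := by
  rw [Wp, aux_iInf_rpow _ (by positivity : (0:ℝ) < 1/p)]
  congr 1; funext π
  exact aux_iInf_rpow _ (by positivity)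

/-- Cost of the product coupling is finite when both measures have finite `p`-th moments. -/
lemma cost_prod_ne_top {μ ν : Measure X} [IsProbabilityMeasure μ] [IsProbabilityMeasure ν]
    {p : ℝ} (hp : 0 ≤ p) (hμp : HasFinitePMoment p μ) (hνp : HasFinitePMoment p ν) :
    ∫⁻ z : X × X, edist z.1 z.2 ^ p ∂(μ.prod ν) ≠ ⊤ := by
  obtain ⟨x₀, hx₀⟩ := hμp
  obtain ⟨y₀, hy₀⟩ := hνp
  have h2 : (2 : ℝ≥0∞) ^ p ≠ ⊤ := ENNReal.rpow_ne_top_of_nonneg hp (by simp)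
  have hA : Measurable fun z : X × X => edist z.1 x₀ ^ p :=
    (measurable_fst.edist measurable_const).pow measurable_const
  have hB : Measurable fun z : X × X => edist z.2 y₀ ^ p :=
    (measurable_snd.edist measurable_const).pow measurable_const
  have hbd : ∀ z : X × X, edist z.1 z.2 ^ p ≤
      2 ^ p * (2 ^ p * (edist z.1 x₀ ^ p + (edist x₀ y₀) ^ p) + edist z.2 y₀ ^ p) := by
    intro z
    refine le_trans (ENNReal.rpow_le_rpow ?_ hp) (aux_add3_rpow _ _ _ hp)
    calc edist z.1 z.2 ≤ edist z.1 x₀ + edist x₀ y₀ + edist y₀ z.2 := edist_triangle4 _ _ _ _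
      _ = edist z.1 x₀ + edist x₀ y₀ + edist z.2 y₀ := by rw [edist_comm y₀]
  refine ne_top_of_le_ne_top ?_ (lintegral_mono hbd)
  rw [lintegral_const_mul (f := fun z : X × X =>
      2 ^ p * (edist z.1 x₀ ^ p + edist x₀ y₀ ^ p) + edist z.2 y₀ ^ p) _
      ((hA.add measurable_const).const_mul _ |>.add hB),
    lintegral_add_left (f := fun z : X × X => 2 ^ p * (edist z.1 x₀ ^ p + edist x₀ y₀ ^ p))
      ((hA.add measurable_const).const_mul _),
    lintegral_const_mul (f := fun z : X × X => edist z.1 x₀ ^ p + edist x₀ y₀ ^ p) _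
      (hA.add measurable_const),
    lintegral_add_left hA, lintegral_const]
  have e1 : ∫⁻ z : X × X, edist z.1 x₀ ^ p ∂(μ.prod ν) = ∫⁻ x, edist x x₀ ^ p ∂μ :=
    lintegral_fst' (by simp [Measure.map_fst_prod])
      (measurable_id.edist measurable_const |>.pow measurable_const)
  have e2 : ∫⁻ z : X × X, edist z.2 y₀ ^ p ∂(μ.prod ν) = ∫⁻ y, edist y y₀ ^ p ∂ν :=
    lintegral_snd' (by simp [Measure.map_snd_prod])
      (measurable_id.edist measurable_const |>.pow measurable_const)
  rw [e1, e2]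
  have hconst : (edist x₀ y₀) ^ p ≠ ⊤ := ENNReal.rpow_ne_top_of_nonneg hp (edist_ne_top _ _)
  have huniv : (μ.prod ν) univ ≠ ⊤ := by simp
  exact ENNReal.mul_ne_top h2 (ENNReal.add_ne_top.2
    ⟨ENNReal.mul_ne_top h2 (ENNReal.add_ne_top.2 ⟨hx₀, ENNReal.mul_ne_top hconst huniv⟩), hy₀⟩)

/-- Almost-Lipschitz estimate: pushing the first measure forward by `φ` changes `Wp`
by at most the `L^p` norm of the displacement. -/
lemma Wp_map_le {α ν : Measure X} [IsProbabilityMeasure α] {p : ℝ} (hp : 1 ≤ p)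
    (φ : X → X) (hφ : Measurable φ) :
    Wp p (α.map φ) ν ≤ (∫⁻ x, edist (φ x) x ^ p ∂α) ^ (1 / p) + Wp p α ν := by
  have hp0 : (0:ℝ) < p := lt_of_lt_of_le one_pos hp
  conv_rhs => rw [Wp_eq_iInf hp0]
  rw [ENNReal.add_iInf]
  refine le_iInf fun π => ?_
  rw [ENNReal.add_iInf]
  refine le_iInf fun hπ => ?_
  obtain ⟨hprob, hfst, hsnd⟩ := hπ
  have hT : Measurable (Prod.map φ (id : X → X)) := hφ.prodMap measurable_id
  set π' := π.map (Prod.map φ id) with hπ'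
  have hπ'prob : IsProbabilityMeasure π' := Measure.isProbabilityMeasure_map hT.aemeasurable
  have hπ'fst : π'.map Prod.fst = α.map φ := by
    rw [hπ', Measure.map_map measurable_fst hT]
    have : (Prod.fst ∘ Prod.map φ (id : X → X)) = φ ∘ Prod.fst := rfl
    rw [this, ← Measure.map_map hφ measurable_fst, hfst]
  have hπ'snd : π'.map Prod.snd = ν := by
    rw [hπ', Measure.map_map measurable_snd hT]
    have : (Prod.snd ∘ Prod.map φ (id : X → X)) = Prod.snd := rfl
    rw [this, hsnd]
  have hmem : π' ∈ Adm (α.map φ) ν := ⟨hπ'prob, hπ'fst, hπ'snd⟩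
  refine le_trans (Wp_le_coupling hmem hp0.le) ?_
  have hcost : ∫⁻ z : X × X, edist z.1 z.2 ^ p ∂π'
      = ∫⁻ z : X × X, edist (φ z.1) z.2 ^ p ∂π := by
    rw [hπ', lintegral_map measurable_ecost hT]
    rfl
  rw [hcost]
  have hu : AEMeasurable (fun z : X × X => edist (φ z.1) z.1) π :=
    ((hφ.comp measurable_fst).edist measurable_fst).aemeasurable
  have hv : AEMeasurable (fun z : X × X => edist z.1 z.2) π :=
    (measurable_fst.edist measurable_snd).aemeasurable
  calc (∫⁻ z : X × X, edist (φ z.1) z.2 ^ p ∂π) ^ (1/p)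
      ≤ (∫⁻ z : X × X, (edist (φ z.1) z.1 + edist z.1 z.2) ^ p ∂π) ^ (1/p) := by
        refine ENNReal.rpow_le_rpow (lintegral_mono fun z => ENNReal.rpow_le_rpow ?_ hp0.le)
          (by positivity)
        exact edist_triangle _ _ _
    _ ≤ (∫⁻ z : X × X, edist (φ z.1) z.1 ^ p ∂π) ^ (1/p)
        + (∫⁻ z : X × X, edist z.1 z.2 ^ p ∂π) ^ (1/p) :=
        ENNReal.lintegral_Lp_add_le hu hv hp
    _ = (∫⁻ x, edist (φ x) x ^ p ∂α) ^ (1/p)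
        + (∫⁻ z : X × X, edist z.1 z.2 ^ p ∂π) ^ (1/p) := by
        rw [lintegral_fst' (f := fun x => edist (φ x) x ^ p) hfst
          ((hφ.edist measurable_id).pow measurable_const)]

end X

section Cont

variable {X : Type*} [MeasurableSpace X] [MetricSpace X] [BorelSpace X]
  [ProperSpace X] {G : Type*} [TopologicalSpace G] [Group G] [MulAction G X]
  [ContinuousSMul G X]

lemma tendsto_displacement {μ : Measure X} [IsProbabilityMeasure μ]
    (hiso : ∀ g : G, Isometry (fun x : X => g • x))
    {p : ℝ} (hp : 0 < p) (hμp : HasFinitePMoment p μ) (h : G) :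
    Tendsto (fun g : G => ∫⁻ x, edist (g • x) (h • x) ^ p ∂μ) (𝓝 h) (𝓝 0) := by
  obtain ⟨x₀, hx₀⟩ := hμp
  rw [ENNReal.tendsto_nhds_zero]
  intro ε hε
  set ε' := min ε 1 with hε'def
  have hε'0 : 0 < ε' := lt_min hε one_pos
  have hε't : ε' ≠ ⊤ := ne_top_of_le_ne_top one_ne_top (min_le_right _ _)
  have hε'2 : ε' / 2 ≠ 0 := (ENNReal.div_pos hε'0.ne' ENNReal.ofNat_ne_top).ne'
  have hε'2t : ε' / 2 ≠ ⊤ := ne_top_of_le_ne_top hε't ENNReal.half_le_self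
  have h3p0 : ((3:ℝ≥0∞) ^ p) ≠ 0 := (ENNReal.rpow_pos (by norm_num) (by norm_num)).ne'
  have h3pt : ((3:ℝ≥0∞) ^ p) ≠ ⊤ := ENNReal.rpow_ne_top_of_nonneg hp.le (by norm_num)
  set T : Measure X := μ.withDensity (fun x => edist x x₀ ^ p) with hT
  have hTfin : T univ ≠ ⊤ := by
    rw [hT, withDensity_apply _ MeasurableSet.univ, setLIntegral_univ]
    exact hx₀
  have hmeasball : ∀ n : ℕ, MeasurableSet (Metric.closedBall x₀ (n:ℝ)) := fun n =>
    Metric.isClosed_closedBall.measurableSet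
  have htail : Tendsto (fun n : ℕ => T ((Metric.closedBall x₀ (n:ℝ))ᶜ)) atTop (𝓝 0) := by
    have h1 := tendsto_measure_iInter_atTop (μ := T)
      (s := fun n : ℕ => (Metric.closedBall x₀ (n:ℝ))ᶜ)
      (fun n => ((hmeasball n).compl).nullMeasurableSet)
      (fun a b hab => compl_subset_compl.2
        (Metric.closedBall_subset_closedBall (by exact_mod_cast hab)))
      ⟨0, ne_top_of_le_ne_top hTfin (measure_mono (subset_univ _))⟩
    have h2 : (⋂ n : ℕ, (Metric.closedBall x₀ (n:ℝ))ᶜ) = ∅ := by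
      rw [← compl_iUnion, Metric.iUnion_closedBall_nat, compl_univ]
    rw [h2, measure_empty] at h1
    exact h1
  set δ : ℝ≥0∞ := ε' / 2 / 3 ^ p with hδdef
  have hδ0 : 0 < δ := ENNReal.div_pos hε'2 h3pt
  obtain ⟨n, hn1, htn⟩ : ∃ n : ℕ, 1 ≤ n ∧ T ((Metric.closedBall x₀ (n:ℝ))ᶜ) ≤ δ := by
    have hev := (ENNReal.tendsto_nhds_zero.mp htail) δ hδ0
    obtain ⟨n, hn⟩ := (hev.and (eventually_ge_atTop 1)).exists
    exact ⟨n, hn.2, hn.1⟩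
  set K := Metric.closedBall x₀ (n:ℝ) with hKdef
  have hK : IsCompact K := isCompact_closedBall _ _
  have hKmeas : MeasurableSet K := hmeasball n
  set r : ℝ≥0∞ := (ε' / 2) ^ (1/p) with hrdef
  have hr0 : 0 < r := ENNReal.rpow_pos (pos_iff_ne_zero.2 hε'2) hε'2t
  have hrp : r ^ p = ε' / 2 := by
    rw [hrdef, ← ENNReal.rpow_mul, one_div_mul_cancel hp.ne', ENNReal.rpow_one]
  have key : ∀ x : X, ∃ V ∈ 𝓝 x, ∀ᶠ g : G in 𝓝 h, ∀ y ∈ V, edist (g • y) (h • y) ≤ r := by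
    intro x
    have hr2 : (0:ℝ≥0∞) < r / 2 := ENNReal.div_pos hr0.ne' ENNReal.ofNat_ne_top
    have hc : Continuous fun q : G × X => q.1 • q.2 := continuous_smul
    have hmem : {q : G × X | q.1 • q.2 ∈ EMetric.ball (h • x) (r/2)} ∈ 𝓝 (h, x) :=
      hc.continuousAt.preimage_mem_nhds (EMetric.ball_mem_nhds _ hr2)
    rw [mem_nhds_prod_iff] at hmem
    obtain ⟨U, hU, V, hV, hUV⟩ := hmem
    refine ⟨V, hV, eventually_iff_exists_mem.mpr ⟨U, hU, fun g hg y hy => ?_⟩⟩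
    have h1 : edist (g • y) (h • x) < r/2 := hUV (Set.mk_mem_prod hg hy)
    have h2 : edist (h • y) (h • x) < r/2 := hUV (Set.mk_mem_prod (mem_of_mem_nhds hU) hy)
    calc edist (g • y) (h • y) ≤ edist (g • y) (h • x) + edist (h • x) (h • y) :=
          edist_triangle _ _ _
      _ ≤ r/2 + r/2 := by
          rw [edist_comm (h • x)]
          exact add_le_add h1.le h2.le
      _ = r := ENNReal.add_halves r
  choose V hV hVg using key
  obtain ⟨t, htK, hcov⟩ := hK.elim_nhds_subcover V (fun x _ => hV x)
  have hunif : ∀ᶠ g : G in 𝓝 h, ∀ x ∈ K, edist (g • x) (h • x) ≤ r := by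
    have hall : ∀ᶠ g : G in 𝓝 h, ∀ x ∈ t, ∀ y ∈ V x, edist (g • y) (h • y) ≤ r :=
      (eventually_all_finset t).mpr fun x _ => hVg x
    filter_upwards [hall] with g hg x hx
    obtain ⟨i, hit, hxV⟩ := Set.mem_iUnion₂.mp (hcov hx)
    exact hg i hit x hxV
  have horbc : Continuous fun g : G => (g • x₀ : X) := continuous_id.smul continuous_const
  have horb : Tendsto (fun g : G => g • x₀) (𝓝 h) (𝓝 (h • x₀)) := horbc.tendsto h
  have hc0 : ∀ᶠ g : G in 𝓝 h, edist (g • x₀) (h • x₀) ≤ 1 := by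
    filter_upwards [horb (EMetric.closedBall_mem_nhds _ one_pos)] with g hg
    exact EMetric.mem_closedBall.mp hg
  filter_upwards [hunif, hc0] with g hg hgc
  have hb1 : ∫⁻ x in K, edist (g • x) (h • x) ^ p ∂μ ≤ ε' / 2 := by
    calc ∫⁻ x in K, edist (g • x) (h • x) ^ p ∂μ ≤ ∫⁻ _ in K, (ε'/2) ∂μ := by
          refine setLIntegral_mono' hKmeas fun x hx => ?_
          rw [← hrp]
          exact ENNReal.rpow_le_rpow (hg x hx) hp.le
      _ = (ε'/2) * μ K := setLIntegral_const _ _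
      _ ≤ (ε'/2) * 1 := mul_le_mul_right prob_le_one _
      _ = ε'/2 := mul_one _
  have hb2 : ∫⁻ x in Kᶜ, edist (g • x) (h • x) ^ p ∂μ ≤ ε' / 2 := by
    have hpt : ∀ x ∈ Kᶜ, edist (g • x) (h • x) ^ p ≤ 3 ^ p * edist x x₀ ^ p := by
      intro x hx
      have hxd : ((n:ℕ) : ℝ≥0∞) ≤ edist x x₀ := by
        have hxd' : (n:ℝ) < dist x x₀ := by
          have hx' := hx
          rw [hKdef, mem_compl_iff, Metric.mem_closedBall, not_le] at hx'
          exact hx'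
        rw [edist_dist]
        calc ((n:ℕ) : ℝ≥0∞) = ENNReal.ofReal (n:ℝ) := (ENNReal.ofReal_natCast n).symm
          _ ≤ ENNReal.ofReal (dist x x₀) := ENNReal.ofReal_le_ofReal hxd'.le
      have h1n : (1 : ℝ≥0∞) ≤ ((n:ℕ) : ℝ≥0∞) := by exact_mod_cast hn1
      have hd1 : edist (g • x₀) (h • x₀) ≤ edist x x₀ := le_trans hgc (le_trans h1n hxd)
      have hineq : edist (g • x) (h • x) ≤ 3 * edist x x₀ := by
        calc edist (g • x) (h • x)
            ≤ edist (g • x) (g • x₀) + edist (g • x₀) (h • x₀) + edist (h • x₀) (h • x) :=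
              edist_triangle4 _ _ _ _
          _ = edist x x₀ + edist (g • x₀) (h • x₀) + edist x₀ x := by
              rw [hiso g x x₀, hiso h x₀ x]
          _ ≤ edist x x₀ + edist x x₀ + edist x x₀ := by
              rw [edist_comm x₀ x]
              exact add_le_add (add_le_add le_rfl hd1) le_rfl
          _ = 3 * edist x x₀ := by ring
      calc edist (g • x) (h • x) ^ p ≤ (3 * edist x x₀) ^ p :=
            ENNReal.rpow_le_rpow hineq hp.le
        _ = 3 ^ p * edist x x₀ ^ p := ENNReal.mul_rpow_of_nonneg _ _ hp.le
    calc ∫⁻ x in Kᶜ, edist (g • x) (h • x) ^ p ∂μ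
        ≤ ∫⁻ x in Kᶜ, 3 ^ p * edist x x₀ ^ p ∂μ := setLIntegral_mono' hKmeas.compl hpt
      _ = 3 ^ p * ∫⁻ x in Kᶜ, edist x x₀ ^ p ∂μ :=
          lintegral_const_mul _ ((measurable_id.edist measurable_const).pow measurable_const)
      _ = 3 ^ p * T Kᶜ := by rw [hT, withDensity_apply _ hKmeas.compl]
      _ ≤ 3 ^ p * δ := mul_le_mul_right htn _
      _ = ε' / 2 := by rw [hδdef, ENNReal.mul_div_cancel h3p0 h3pt]
  calc ∫⁻ x, edist (g • x) (h • x) ^ p ∂μ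
      = (∫⁻ x in K, edist (g • x) (h • x) ^ p ∂μ)
        + ∫⁻ x in Kᶜ, edist (g • x) (h • x) ^ p ∂μ := (lintegral_add_compl _ hKmeas).symm
    _ ≤ ε'/2 + ε'/2 := add_le_add hb1 hb2
    _ = ε' := ENNReal.add_halves ε'
    _ ≤ ε := min_le_left _ _

end Cont

/-- Existence of a minimizer for the shape-distance problem: if `X` is a proper Polish
metric space and `G` a topological group acting continuously, properly and by isometries
on `X`, then for all `μ, ν ∈ P_p(X)` the infimum `inf_{g ∈ G} W_p(g_#μ, ν)` is attained. -/
theorem shape_distance_minimizer_exists {X : Type*} [MetricSpace X] [CompleteSpace X]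
    [TopologicalSpace.SeparableSpace X] [ProperSpace X] [MeasurableSpace X] [BorelSpace X]
    (G : Type*) [Group G] [TopologicalSpace G] [IsTopologicalGroup G]
    [MulAction G X] [ContinuousSMul G X]
    (hiso : ∀ g : G, Isometry (fun x : X => g • x))
    (hproper : IsProperMap (fun q : G × X => (q.1 • q.2, q.2)))
    (p : ℝ) (hp : 1 ≤ p)
    (μ ν : Measure X)
    (hμ : IsProbabilityMeasure μ) (hμp : HasFinitePMoment p μ)
    (hν : IsProbabilityMeasure ν) (hνp : HasFinitePMoment p ν) :
    ∃ g₀ : G, Wp p (μ.map (fun x : X => g₀ • x)) ν =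
      ⨅ g : G, Wp p (μ.map (fun x : X => g • x)) ν := by
  haveI : SecondCountableTopology X := UniformSpace.secondCountable_of_separable X
  have hp0 : (0:ℝ) < p := lt_of_lt_of_le one_pos hp
  obtain ⟨x₀, hx₀⟩ := hμp
  set f : G → ℝ≥0∞ := fun g => Wp p (μ.map (fun x : X => g • x)) ν with hfdef
  have hmg : ∀ g : G, Measurable (fun x : X => g • x) := fun g => (hiso g).continuous.measurable
  have hprob : ∀ g : G, IsProbabilityMeasure (μ.map (fun x : X => g • x)) := fun g =>
    Measure.isProbabilityMeasure_map (hmg g).aemeasurable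
  have hmom : ∀ g : G, ∫⁻ x, edist x (g • x₀) ^ p ∂(μ.map (fun x : X => g • x)) ≠ ⊤ := by
    intro g
    rw [lintegral_map (f := fun x => edist x (g • x₀) ^ p)
      ((measurable_id.edist measurable_const).pow measurable_const) (hmg g)]
    have heq : ∀ x : X, edist (g • x) (g • x₀) = edist x x₀ := fun x => hiso g x x₀
    simp_rw [heq]
    exact hx₀
  have hfin : ∀ g : G, f g ≠ ⊤ := by
    intro g
    haveI := hprob g
    have h1 : f g ≤ (∫⁻ z : X × X,
        edist z.1 z.2 ^ p ∂((μ.map (fun x : X => g • x)).prod ν)) ^ (1/p) :=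
      Wp_le_coupling (adm_prod _ _) hp0.le
    have h2 := cost_prod_ne_top (μ := μ.map (fun x : X => g • x)) (ν := ν) hp0.le
      ⟨g • x₀, hmom g⟩ hνp
    exact ne_top_of_le_ne_top (ENNReal.rpow_ne_top_of_nonneg (by positivity) h2) h1
  -- the almost-Lipschitz estimate
  have hLip : ∀ g h : G, f g ≤ (∫⁻ x, edist (g • x) (h • x) ^ p ∂μ) ^ (1/p) + f h := by
    intro g h
    haveI := hprob h
    set φ : X → X := fun x => g • h⁻¹ • x with hφdef
    have hφm : Measurable φ :=
      ((hiso g).continuous.comp (hiso h⁻¹).continuous).measurable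
    have hmap : (μ.map (fun x : X => h • x)).map φ = μ.map (fun x : X => g • x) := by
      rw [Measure.map_map hφm (hmg h)]
      congr 1
      funext x
      show g • h⁻¹ • h • x = g • x
      rw [inv_smul_smul]
    have hint : ∫⁻ x, edist (φ x) x ^ p ∂(μ.map (fun x : X => h • x))
        = ∫⁻ x, edist (g • x) (h • x) ^ p ∂μ := by
      rw [lintegral_map (f := fun x => edist (φ x) x ^ p)
        ((hφm.edist measurable_id).pow measurable_const) (hmg h)]
      congr 1
      funext x
      show edist (g • h⁻¹ • h • x) (h • x) ^ p = _
      rw [inv_smul_smul]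
    have hW := Wp_map_le (α := μ.map (fun x : X => h • x)) (ν := ν) hp φ hφm
    rw [hmap, hint] at hW
    exact hW
  -- continuity of f
  have hcont : Continuous f := by
    rw [continuous_iff_continuousAt]
    intro h
    set D : G → ℝ≥0∞ := fun g => (∫⁻ x, edist (g • x) (h • x) ^ p ∂μ) ^ (1/p) with hDdef
    have hD : Tendsto D (𝓝 h) (𝓝 0) := by
      have h1 := tendsto_displacement hiso hp0 ⟨x₀, hx₀⟩ h
      have h2 : Tendsto (fun y : ℝ≥0∞ => y ^ (1/p)) (𝓝 0) (𝓝 ((0:ℝ≥0∞) ^ (1/p))) :=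
        ENNReal.continuous_rpow_const.tendsto 0
      rw [ENNReal.zero_rpow_of_pos (by positivity)] at h2
      exact h2.comp h1
    have hupper : Tendsto (fun g : G => D g + f h) (𝓝 h) (𝓝 (f h)) := by
      have := hD.add (tendsto_const_nhds (x := f h))
      simpa using this
    have hlower : Tendsto (fun g : G => f h - D g) (𝓝 h) (𝓝 (f h)) := by
      have := ENNReal.Tendsto.sub (tendsto_const_nhds (x := f h)) hD
        (Or.inl (hfin h))
      simpa using this
    have hle1 : ∀ g : G, f h - D g ≤ f g := by
      intro g
      refine tsub_le_iff_right.mpr ?_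
      have := hLip h g
      have hsymm : (∫⁻ x, edist (h • x) (g • x) ^ p ∂μ) ^ (1/p) = D g := by
        rw [hDdef]
        congr 1
        congr 1
        funext x
        rw [edist_comm]
      rw [hsymm] at this
      rwa [add_comm] at this
    have hle2 : ∀ g : G, f g ≤ D g + f h := fun g => hLip g h
    exact tendsto_of_tendsto_of_tendsto_of_le_of_le hlower hupper hle1 hle2
  -- choice of a large ball carrying most of the mass of both measures
  obtain ⟨R, hμR, hνR⟩ : ∃ R : ℕ, ((3/4:ℝ≥0):ℝ≥0∞) ≤ μ (Metric.closedBall x₀ (R:ℝ)) ∧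
      ((3/4:ℝ≥0):ℝ≥0∞) ≤ ν (Metric.closedBall x₀ (R:ℝ)) := by
    have hmono : Monotone fun n : ℕ => Metric.closedBall x₀ (n:ℝ) := fun a b hab =>
      Metric.closedBall_subset_closedBall (by exact_mod_cast hab)
    have hμt : Tendsto (fun n : ℕ => μ (Metric.closedBall x₀ (n:ℝ))) atTop (𝓝 1) := by
      have h1 := tendsto_measure_iUnion_atTop (μ := μ) hmono
      rwa [Metric.iUnion_closedBall_nat, measure_univ] at h1
    have hνt : Tendsto (fun n : ℕ => ν (Metric.closedBall x₀ (n:ℝ))) atTop (𝓝 1) := by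
      have h1 := tendsto_measure_iUnion_atTop (μ := ν) hmono
      rwa [Metric.iUnion_closedBall_nat, measure_univ] at h1
    have hμev := hμt.eventually (eventually_gt_nhds aux_half_lt_one)
    have hνev := hνt.eventually (eventually_gt_nhds aux_half_lt_one)
    obtain ⟨R, hR⟩ := (hμev.and hνev).exists
    exact ⟨R, hR.1.le, hR.2.le⟩
  -- coercivity
  have hcoer : ∀ g : G, edist (g • x₀) x₀ ≤ 2 * f g + (((R:ℕ):ℝ≥0∞) + ((R:ℕ):ℝ≥0∞)) := by
    intro g
    haveI := hprob g
    set e : ℝ≥0∞ := edist (g • x₀) x₀ with hedef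
    set t : ℝ≥0∞ := e - (((R:ℕ):ℝ≥0∞) + ((R:ℕ):ℝ≥0∞)) with htdef
    set B1 := Metric.closedBall (g • x₀) (R:ℝ) with hB1def
    set B2 := Metric.closedBall x₀ (R:ℝ) with hB2def
    have hB1m : MeasurableSet B1 := Metric.isClosed_closedBall.measurableSet
    have hB2m : MeasurableSet B2 := Metric.isClosed_closedBall.measurableSet
    set A := B1 ×ˢ B2 with hAdef
    have hAm : MeasurableSet A := hB1m.prod hB2m
    have hRe : ∀ a b : X, dist a b ≤ (R:ℝ) → edist a b ≤ ((R:ℕ):ℝ≥0∞) := by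
      intro a b hab
      rw [edist_dist]
      calc ENNReal.ofReal (dist a b) ≤ ENNReal.ofReal (R:ℝ) := ENNReal.ofReal_le_ofReal hab
        _ = ((R:ℕ):ℝ≥0∞) := ENNReal.ofReal_natCast R
    have hlow : ∀ π ∈ Adm (μ.map (fun x : X => g • x)) ν,
        t ^ p * ((1/2:ℝ≥0):ℝ≥0∞) ≤ ∫⁻ z : X × X, edist z.1 z.2 ^ p ∂π := by
      intro π hπ
      obtain ⟨hπp, hπ1, hπ2⟩ := hπ
      haveI := hπp
      have hm1 : π (Prod.fst ⁻¹' B1ᶜ) ≤ ((1/4:ℝ≥0):ℝ≥0∞) := by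
        rw [← Measure.map_apply measurable_fst hB1m.compl, hπ1,
          Measure.map_apply (hmg g) hB1m.compl]
        have hpre : (fun x : X => g • x) ⁻¹' B1ᶜ = B2ᶜ := by
          ext x
          simp only [hB1def, hB2def, mem_preimage, mem_compl_iff, Metric.mem_closedBall]
          rw [(hiso g).dist_eq x x₀]
        rw [hpre]
        have hcompl : μ B2ᶜ = 1 - μ B2 := by
          rw [measure_compl hB2m (measure_ne_top _ _), measure_univ]
        rw [hcompl]
        exact le_trans (tsub_le_tsub_left hμR 1) aux_half_facts₂
      have hm2 : π (Prod.snd ⁻¹' B2ᶜ) ≤ ((1/4:ℝ≥0):ℝ≥0∞) := by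
        rw [← Measure.map_apply measurable_snd hB2m.compl, hπ2]
        have hcompl : ν B2ᶜ = 1 - ν B2 := by
          rw [measure_compl hB2m (measure_ne_top _ _), measure_univ]
        rw [hcompl]
        exact le_trans (tsub_le_tsub_left hνR 1) aux_half_facts₂
      have hcover : (univ : Set (X × X)) ⊆ A ∪ (Prod.fst ⁻¹' B1ᶜ ∪ Prod.snd ⁻¹' B2ᶜ) := by
        intro z _
        by_cases h1 : z.1 ∈ B1
        · by_cases h2 : z.2 ∈ B2
          · exact Or.inl ⟨h1, h2⟩
          · exact Or.inr (Or.inr h2)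
        · exact Or.inr (Or.inl h1)
      have hπA : ((1/2:ℝ≥0):ℝ≥0∞) ≤ π A := by
        refine aux_half_facts₃ _ ?_
        calc (1:ℝ≥0∞) = π univ := measure_univ.symm
          _ ≤ π (A ∪ (Prod.fst ⁻¹' B1ᶜ ∪ Prod.snd ⁻¹' B2ᶜ)) := measure_mono hcover
          _ ≤ π A + π (Prod.fst ⁻¹' B1ᶜ ∪ Prod.snd ⁻¹' B2ᶜ) := measure_union_le _ _
          _ ≤ π A + (π (Prod.fst ⁻¹' B1ᶜ) + π (Prod.snd ⁻¹' B2ᶜ)) :=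
              add_le_add le_rfl (measure_union_le _ _)
          _ ≤ π A + (((1/4:ℝ≥0):ℝ≥0∞) + ((1/4:ℝ≥0):ℝ≥0∞)) :=
              add_le_add le_rfl (add_le_add hm1 hm2)
          _ = π A + ((1/2:ℝ≥0):ℝ≥0∞) := by rw [aux_half_facts₁]
      have hedistA : ∀ z ∈ A, t ≤ edist z.1 z.2 := by
        intro z hz
        obtain ⟨hz1, hz2⟩ := hz
        refine tsub_le_iff_right.mpr ?_
        calc e ≤ edist (g • x₀) z.1 + edist z.1 z.2 + edist z.2 x₀ := edist_triangle4 _ _ _ _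
          _ ≤ ((R:ℕ):ℝ≥0∞) + edist z.1 z.2 + ((R:ℕ):ℝ≥0∞) := by
              refine add_le_add (add_le_add ?_ le_rfl) ?_
              · rw [edist_comm]
                exact hRe _ _ hz1
              · exact hRe _ _ hz2
          _ = edist z.1 z.2 + (((R:ℕ):ℝ≥0∞) + ((R:ℕ):ℝ≥0∞)) := by ring
      calc t ^ p * ((1/2:ℝ≥0):ℝ≥0∞) ≤ t ^ p * π A := mul_le_mul_right hπA _
        _ = ∫⁻ _ in A, t ^ p ∂π := (setLIntegral_const _ _).symm
        _ ≤ ∫⁻ z in A, edist z.1 z.2 ^ p ∂π :=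
            setLIntegral_mono' hAm fun z hz => ENNReal.rpow_le_rpow (hedistA z hz) hp0.le
        _ ≤ ∫⁻ z : X × X, edist z.1 z.2 ^ p ∂π := setLIntegral_le_lintegral _ _
    have hWlow : t * ((1/2:ℝ≥0):ℝ≥0∞) ≤ f g := by
      have hiInf : t ^ p * ((1/2:ℝ≥0):ℝ≥0∞) ≤
          ⨅ π ∈ Adm (μ.map (fun x : X => g • x)) ν, ∫⁻ z : X × X, edist z.1 z.2 ^ p ∂π :=
        le_iInf₂ hlow
      have h1 : (t ^ p * ((1/2:ℝ≥0):ℝ≥0∞)) ^ (1/p) ≤ f g :=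
        ENNReal.rpow_le_rpow hiInf (by positivity)
      have h2 : (t ^ p * ((1/2:ℝ≥0):ℝ≥0∞)) ^ (1/p)
          = t * (((1/2:ℝ≥0):ℝ≥0∞)) ^ (1/p) := by
        rw [ENNReal.mul_rpow_of_nonneg _ _ (by positivity), ← ENNReal.rpow_mul,
          mul_one_div_cancel hp0.ne', ENNReal.rpow_one]
      have h3 : (((1/2:ℝ≥0):ℝ≥0∞)) ≤ (((1/2:ℝ≥0):ℝ≥0∞)) ^ (1/p) := by
        have := ENNReal.rpow_le_rpow_of_exponent_ge (x := ((1/2:ℝ≥0):ℝ≥0∞))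
          (by rw [← ENNReal.coe_one, ENNReal.coe_le_coe, ← NNReal.coe_le_coe]; push_cast; norm_num)
          (by rw [div_le_one hp0]; exact hp : 1/p ≤ 1)
        rwa [ENNReal.rpow_one] at this
      calc t * ((1/2:ℝ≥0):ℝ≥0∞) ≤ t * (((1/2:ℝ≥0):ℝ≥0∞)) ^ (1/p) := mul_le_mul_right h3 _
        _ = (t ^ p * ((1/2:ℝ≥0):ℝ≥0∞)) ^ (1/p) := h2.symm
        _ ≤ f g := h1
    have ht2 : t ≤ 2 * f g := by
      calc t = 2 * ((1/2:ℝ≥0):ℝ≥0∞) * t := by rw [aux_two_halves, one_mul]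
        _ = 2 * (t * ((1/2:ℝ≥0):ℝ≥0∞)) := by ring
        _ ≤ 2 * f g := mul_le_mul_right hWlow _
    calc e ≤ t + (((R:ℕ):ℝ≥0∞) + ((R:ℕ):ℝ≥0∞)) := le_tsub_add
      _ ≤ 2 * f g + (((R:ℕ):ℝ≥0∞) + ((R:ℕ):ℝ≥0∞)) := add_le_add_left ht2 _
  -- compact sublevel set
  set C := f 1 with hCdef
  have hCt : C ≠ ⊤ := hfin 1
  set bnd : ℝ≥0∞ := 2 * C + (((R:ℕ):ℝ≥0∞) + ((R:ℕ):ℝ≥0∞)) with hbnddef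
  have hbndt : bnd ≠ ⊤ := by
    refine ENNReal.add_ne_top.2 ⟨ENNReal.mul_ne_top ?_ hCt, ENNReal.add_ne_top.2
      ⟨ENNReal.natCast_ne_top R, ENNReal.natCast_ne_top R⟩⟩
    simp
  set r₀ : ℝ := bnd.toReal with hr₀def
  have hbound : ∀ g : G, f g ≤ C → g • x₀ ∈ Metric.closedBall x₀ r₀ := by
    intro g hg
    have h1 : edist (g • x₀) x₀ ≤ bnd :=
      le_trans (hcoer g) (add_le_add_left (mul_le_mul_right hg 2) _)
    rw [Metric.mem_closedBall]
    have h2 := (ENNReal.toReal_le_toReal (edist_ne_top _ _) hbndt).mpr h1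
    rwa [← dist_edist] at h2
  have hTcomp : IsCompact {g : G | g • x₀ ∈ Metric.closedBall x₀ r₀} := by
    have hpre := hproper.isCompact_preimage
      (K := Metric.closedBall x₀ r₀ ×ˢ ({x₀} : Set X))
      ((isCompact_closedBall x₀ r₀).prod isCompact_singleton)
    have himg : {g : G | g • x₀ ∈ Metric.closedBall x₀ r₀} =
        Prod.fst '' ((fun q : G × X => (q.1 • q.2, q.2)) ⁻¹'
          (Metric.closedBall x₀ r₀ ×ˢ ({x₀} : Set X))) := by
      ext g
      constructor
      · intro hg
        exact ⟨(g, x₀), ⟨hg, rfl⟩, rfl⟩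
      · rintro ⟨⟨g', x⟩, ⟨hg1, hx⟩, rfl⟩
        simp only [mem_singleton_iff] at hx
        subst hx
        exact hg1
    rw [himg]
    exact hpre.image continuous_fst
  set S := {g : G | f g ≤ C} with hSdef
  have hS1 : (1:G) ∈ S := by
    simp only [hSdef, Set.mem_setOf_eq, hCdef]
    exact le_rfl
  have hSclosed : IsClosed S := isClosed_le hcont continuous_const
  have hSsub : S ⊆ {g : G | g • x₀ ∈ Metric.closedBall x₀ r₀} := fun g hg => hbound g hg
  have hScomp : IsCompact S := by
    have hi := hTcomp.inter_right hSclosed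
    rwa [inter_eq_self_of_subset_right hSsub] at hi
  obtain ⟨g₀, hg₀S, hg₀min⟩ := hScomp.exists_isMinOn ⟨1, hS1⟩ hcont.continuousOn
  refine ⟨g₀, le_antisymm (le_iInf fun g => ?_) (iInf_le _ g₀)⟩
  by_cases hg : f g ≤ C
  · exact hg₀min hg
  · exact le_trans (hg₀min hS1) (le_of_not_ge hg)

end
end

section
/- Let (X,d) be a proper Polish metric space, p ≥ 1, and let G be a topological group acting on X by isometries such that the action is continuous and proper. Then the shape distance D_p(μ,ν) := inf_{g ∈ G} W_p(g_#μ, ν) is a metric on the quotient of P_p(X) by the relation μ ∼ ν :⇔ ∃ g ∈ G, g_#μ = ν; in particular, if D_p(μ,ν) = 0 then there exists g ∈ G with g_#μ = ν. -/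
open MeasureTheory ENNReal Set

noncomputable section

/-- Shape distance `D_p(μ,ν) := inf_{g ∈ G} W_p(g_#μ, ν)` for a group action. -/
def DpAct {X : Type*} (G : Type*) [Group G] [MulAction G X] [MeasurableSpace X]
    [MetricSpace X] (p : ℝ) (μ ν : Measure X) : ℝ≥0∞ :=
  ⨅ g : G, Wp p (μ.map (fun x : X => g • x)) ν

set_option linter.unusedSectionVars false
set_option maxHeartbeats 1000000

namespace ShapeAux

variable {X : Type*} [MetricSpace X] [SecondCountableTopology X] [MeasurableSpace X] [BorelSpace X]

lemma cost_measurable (p : ℝ) : Measurable (fun z : X × X => edist z.1 z.2 ^ p) :=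
  continuous_edist.measurable.pow_const p

lemma prod_mem_adm {μ ν : Measure X} (hμ : IsProbabilityMeasure μ) (hν : IsProbabilityMeasure ν) :
    μ.prod ν ∈ Adm μ ν := by
  refine ⟨by infer_instance, ?_, ?_⟩
  · rw [Measure.map_fst_prod]; simp
  · rw [Measure.map_snd_prod]; simp

lemma Wp_le_cost {p : ℝ} (hp : 0 < p) {μ ν : Measure X} {π : Measure (X × X)} (hπ : π ∈ Adm μ ν) :
    Wp p μ ν ≤ (∫⁻ z : X × X, edist z.1 z.2 ^ p ∂π) ^ (1 / p) :=
  ENNReal.rpow_le_rpow (iInf₂_le π hπ) (by positivity)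

lemma exists_adm_of_lt {p : ℝ} (hp : 0 < p) {μ ν : Measure X} {ε : ℝ≥0∞}
    (hε : Wp p μ ν < ε) :
    ∃ π ∈ Adm μ ν, (∫⁻ z : X × X, edist z.1 z.2 ^ p ∂π) ^ (1 / p) ≤ ε := by
  rw [Wp] at hε
  have h1 : (⨅ π ∈ Adm μ ν, ∫⁻ z : X × X, edist z.1 z.2 ^ p ∂π) < ε ^ p := by
    have := ENNReal.rpow_lt_rpow hε hp
    rwa [← ENNReal.rpow_mul, one_div, inv_mul_cancel₀ hp.ne', ENNReal.rpow_one] at this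
  rw [iInf_lt_iff] at h1
  obtain ⟨π, h1⟩ := h1
  rw [iInf_lt_iff] at h1
  obtain ⟨hπ, h1⟩ := h1
  refine ⟨π, hπ, ?_⟩
  calc (∫⁻ z : X × X, edist z.1 z.2 ^ p ∂π) ^ (1/p) ≤ (ε ^ p) ^ (1/p) :=
        ENNReal.rpow_le_rpow h1.le (by positivity)
    _ = ε := by rw [← ENNReal.rpow_mul, mul_one_div, div_self hp.ne', ENNReal.rpow_one]

lemma adm_map {μ ν : Measure X} {π : Measure (X × X)} (hπ : π ∈ Adm μ ν) {g : X → X}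
    (hg : Measurable g) : π.map (Prod.map g g) ∈ Adm (μ.map g) (ν.map g) := by
  obtain ⟨hprob, h1, h2⟩ := hπ
  have hm : Measurable (Prod.map g g) := hg.prodMap hg
  haveI := hprob
  refine ⟨Measure.isProbabilityMeasure_map hm.aemeasurable, ?_, ?_⟩
  · rw [Measure.map_map measurable_fst hm, show (Prod.fst ∘ Prod.map g g) = g ∘ Prod.fst from rfl,
      ← Measure.map_map hg measurable_fst, h1]
  · rw [Measure.map_map measurable_snd hm, show (Prod.snd ∘ Prod.map g g) = g ∘ Prod.snd from rfl,
      ← Measure.map_map hg measurable_snd, h2]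

lemma cost_map_eq {p : ℝ} {π : Measure (X × X)} {g : X → X} (hg : Isometry g) :
    ∫⁻ z : X × X, edist z.1 z.2 ^ p ∂(π.map (Prod.map g g)) =
      ∫⁻ z : X × X, edist z.1 z.2 ^ p ∂π := by
  rw [lintegral_map (cost_measurable p) (hg.continuous.measurable.prodMap hg.continuous.measurable)]
  simp only [Prod.map_fst, Prod.map_snd, hg.edist_eq]

lemma Wp_map_le {p : ℝ} (hp : 0 < p) {μ ν : Measure X} {g : X → X} (hg : Isometry g) :
    Wp p (μ.map g) (ν.map g) ≤ Wp p μ ν := by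
  apply ENNReal.rpow_le_rpow _ (by positivity)
  refine le_iInf₂ fun π hπ => ?_
  exact iInf₂_le_of_le (π.map (Prod.map g g)) (adm_map hπ hg.continuous.measurable)
    (le_of_eq (cost_map_eq hg))

lemma Wp_comm {p : ℝ} (hp : 0 < p) (μ ν : Measure X) : Wp p μ ν = Wp p ν μ := by
  have key : ∀ α β : Measure X, Wp p α β ≤ Wp p β α := by
    intro α β
    apply ENNReal.rpow_le_rpow _ (by positivity)
    refine le_iInf₂ fun π hπ => ?_
    obtain ⟨hprob, h1, h2⟩ := hπ
    haveI := hprob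
    refine iInf₂_le_of_le (π.map Prod.swap) ⟨Measure.isProbabilityMeasure_map measurable_swap.aemeasurable, ?_, ?_⟩ ?_
    · rw [Measure.map_map measurable_fst measurable_swap]; exact h2
    · rw [Measure.map_map measurable_snd measurable_swap]; exact h1
    · rw [lintegral_map (cost_measurable p) measurable_swap]
      simp [edist_comm]
  exact le_antisymm (key μ ν) (key ν μ)

end ShapeAux

section Group

variable {X : Type*} [MetricSpace X] [SecondCountableTopology X] [MeasurableSpace X]
  [BorelSpace X] {G : Type*} [Group G] [MulAction G X]

variable (hiso : ∀ g : G, Isometry (fun x : X => g • x))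
include hiso

lemma smul_measurable (g : G) : Measurable (fun x : X => g • x) :=
  (hiso g).continuous.measurable

lemma map_smul_smul (μ : Measure X) (g h : G) :
    (μ.map (fun x : X => g • x)).map (fun x : X => h • x)
      = μ.map (fun x : X => (h * g) • x) := by
  rw [Measure.map_map (smul_measurable hiso h) (smul_measurable hiso g)]
  simp only [Function.comp_def, mul_smul]

lemma map_one_smul (μ : Measure X) : μ.map (fun x : X => (1 : G) • x) = μ := by
  simp only [one_smul]
  exact Measure.map_id

lemma Wp_smul_smul {p : ℝ} (hp : 0 < p) (μ ν : Measure X) (g : G) :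
    Wp p (μ.map (fun x : X => g • x)) (ν.map (fun x : X => g • x)) = Wp p μ ν := by
  refine le_antisymm (ShapeAux.Wp_map_le hp (hiso g)) ?_
  have h2 := ShapeAux.Wp_map_le (X := X) hp (hiso g⁻¹)
    (μ := μ.map (fun x : X => g • x)) (ν := ν.map (fun x : X => g • x))
  rwa [map_smul_smul hiso, map_smul_smul hiso, inv_mul_cancel, map_one_smul hiso,
    map_one_smul hiso] at h2

lemma Wp_smul_left_right {p : ℝ} (hp : 0 < p) (μ ν : Measure X) (g h : G) :
    Wp p (μ.map (fun x : X => h • x)) (ν.map (fun x : X => g • x))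
      = Wp p (μ.map (fun x : X => (g⁻¹ * h) • x)) ν := by
  conv_lhs => rw [← Wp_smul_smul hiso hp (μ.map (fun x : X => h • x))
    (ν.map (fun x : X => g • x)) g⁻¹]
  rw [map_smul_smul hiso, map_smul_smul hiso, inv_mul_cancel, map_one_smul hiso]

lemma DpAct_map_left {p : ℝ} (hp : 0 < p) (μ ν : Measure X) (g : G) :
    DpAct G p (μ.map (fun x : X => g • x)) ν = DpAct G p μ ν := by
  unfold DpAct
  refine le_antisymm (le_iInf fun h => ?_) (le_iInf fun h => ?_)
  · refine iInf_le_of_le (h * g⁻¹) (le_of_eq ?_)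
    rw [map_smul_smul hiso, inv_mul_cancel_right]
  · refine iInf_le_of_le (h * g) (le_of_eq ?_)
    rw [map_smul_smul hiso]

lemma DpAct_map_right {p : ℝ} (hp : 0 < p) (μ ν : Measure X) (g : G) :
    DpAct G p μ (ν.map (fun x : X => g • x)) = DpAct G p μ ν := by
  unfold DpAct
  refine le_antisymm (le_iInf fun h => ?_) (le_iInf fun h => ?_)
  · refine iInf_le_of_le (g * h) (le_of_eq ?_)
    rw [Wp_smul_left_right hiso hp, inv_mul_cancel_left]
  · refine iInf_le_of_le (g⁻¹ * h) (le_of_eq (Wp_smul_left_right hiso hp μ ν g h).symm)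

lemma DpAct_comm {p : ℝ} (hp : 0 < p) (μ ν : Measure X) :
    DpAct G p μ ν = DpAct G p ν μ := by
  have key : ∀ α β : Measure X, DpAct G p α β ≤ DpAct G p β α := by
    intro α β
    unfold DpAct
    refine le_iInf fun g => ?_
    refine iInf_le_of_le g⁻¹ ?_
    rw [ShapeAux.Wp_comm hp]
    refine le_of_eq ?_
    conv_rhs => rw [← Wp_smul_smul hiso hp (β.map (fun x : X => g • x)) α g⁻¹,
      map_smul_smul hiso, inv_mul_cancel, map_one_smul hiso]
  exact le_antisymm (key μ ν) (key ν μ)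

omit hiso in
lemma Wp_self {p : ℝ} (hp : 0 < p) (μ : Measure X) (hμ : IsProbabilityMeasure μ) :
    Wp p μ μ = 0 := by
  have hdiag : Measurable (fun x : X => (x, x)) := measurable_id.prodMk measurable_id
  have hπ : μ.map (fun x : X => (x, x)) ∈ Adm μ μ := by
    refine ⟨Measure.isProbabilityMeasure_map hdiag.aemeasurable, ?_, ?_⟩
    · rw [Measure.map_map measurable_fst hdiag]; exact Measure.map_id
    · rw [Measure.map_map measurable_snd hdiag]; exact Measure.map_id
  have h0 : (∫⁻ z : X × X, edist z.1 z.2 ^ p ∂(μ.map fun x : X => (x, x))) = 0 := by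
    rw [lintegral_map (ShapeAux.cost_measurable p) hdiag]
    simp [ENNReal.zero_rpow_of_pos hp]
  refine le_antisymm ?_ zero_le
  have h1 := ShapeAux.Wp_le_cost hp hπ
  rwa [h0, ENNReal.zero_rpow_of_pos (by positivity : (0:ℝ) < 1/p)] at h1

lemma DpAct_self {p : ℝ} (hp : 0 < p) (μ : Measure X) (hμ : IsProbabilityMeasure μ) :
    DpAct G p μ μ = 0 := by
  refine le_antisymm ?_ zero_le
  refine iInf_le_of_le 1 ?_
  rw [map_one_smul hiso, Wp_self hp μ hμ]

end Group

section Gluing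
open ProbabilityTheory

variable {X : Type*} [MetricSpace X] [CompleteSpace X] [TopologicalSpace.SeparableSpace X]
  [Nonempty X] [MeasurableSpace X] [BorelSpace X]

lemma cost_measurable' (p : ℝ) : Measurable (fun z : X × X => edist z.2 z.1 ^ p) :=
  (continuous_edist.comp (continuous_snd.prodMk continuous_fst)).measurable.pow_const p

lemma glue {μ ν σ : Measure X} (hσ : IsProbabilityMeasure σ)
    {π₁ π₂ : Measure (X × X)} (h1 : π₁ ∈ Adm μ σ) (h2 : π₂ ∈ Adm σ ν) {p : ℝ} (hp : 1 ≤ p) :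
    ∃ π₀ ∈ Adm μ ν, (∫⁻ z : X × X, edist z.1 z.2 ^ p ∂π₀) ^ (1/p) ≤
      (∫⁻ z : X × X, edist z.1 z.2 ^ p ∂π₁) ^ (1/p) +
        (∫⁻ z : X × X, edist z.1 z.2 ^ p ∂π₂) ^ (1/p) := by
  have hp0 : (0:ℝ) < p := by linarith
  have h1p : (0:ℝ) ≤ 1 / p := by positivity
  obtain ⟨h1prob, h1f, h1s⟩ := h1
  obtain ⟨h2prob, h2f, h2s⟩ := h2
  haveI := h1prob; haveI := h2prob; haveI := hσ
  set ρ₁ : Measure (X × X) := π₁.map Prod.swap with hρ₁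
  haveI : IsProbabilityMeasure ρ₁ := Measure.isProbabilityMeasure_map measurable_swap.aemeasurable
  have hρ₁fst : ρ₁.fst = σ := by
    rw [Measure.fst, hρ₁, Measure.map_map measurable_fst measurable_swap]
    exact h1s
  have hπ₂fst : π₂.fst = σ := h2f
  set κ₁ := ρ₁.condKernel with hκ₁
  set κ₂ := π₂.condKernel with hκ₂
  have hd1 : σ.compProd κ₁ = ρ₁ := by
    rw [← hρ₁fst, hκ₁]; exact ρ₁.disintegrate ρ₁.condKernel
  have hd2 : σ.compProd κ₂ = π₂ := by
    rw [← hπ₂fst, hκ₂]; exact π₂.disintegrate π₂.condKernel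
  set τ : Measure (X × X × X) := σ.compProd (κ₁ ×ₖ κ₂) with hτ
  haveI : IsProbabilityMeasure τ := by rw [hτ]; infer_instance
  have hm13 : Measurable (fun q : X × X × X => (q.1, q.2.1)) := by fun_prop
  have hm14 : Measurable (fun q : X × X × X => (q.1, q.2.2)) := by fun_prop
  have map13 : τ.map (fun q : X × X × X => (q.1, q.2.1)) = σ.compProd κ₁ := by
    ext s hs
    rw [Measure.map_apply hm13 hs, hτ, Measure.compProd_apply (hm13 hs),
      Measure.compProd_apply hs]
    congr 1; funext a
    have hset : (Prod.mk a ⁻¹' ((fun q : X × X × X => (q.1, q.2.1)) ⁻¹' s))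
        = {z : X × X | z.1 ∈ Prod.mk a ⁻¹' s} := rfl
    rw [hset, ← Kernel.fst_apply' _ _ (measurable_prodMk_left hs), Kernel.fst_prod]
  have map14 : τ.map (fun q : X × X × X => (q.1, q.2.2)) = σ.compProd κ₂ := by
    ext s hs
    rw [Measure.map_apply hm14 hs, hτ, Measure.compProd_apply (hm14 hs),
      Measure.compProd_apply hs]
    congr 1; funext a
    have hset : (Prod.mk a ⁻¹' ((fun q : X × X × X => (q.1, q.2.2)) ⁻¹' s))
        = Prod.snd ⁻¹' (Prod.mk a ⁻¹' s) := rfl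
    rw [hset, ← Kernel.snd_apply' _ _ (measurable_prodMk_left hs), Kernel.snd_prod]
  refine ⟨τ.map Prod.snd, ⟨Measure.isProbabilityMeasure_map measurable_snd.aemeasurable, ?_, ?_⟩, ?_⟩
  · rw [Measure.map_map measurable_fst measurable_snd,
      show (Prod.fst ∘ (Prod.snd : X × X × X → X × X))
        = (Prod.snd ∘ fun q : X × X × X => (q.1, q.2.1)) from rfl,
      ← Measure.map_map measurable_snd hm13, map13, hd1, hρ₁,
      Measure.map_map measurable_snd measurable_swap]
    exact h1f
  · rw [Measure.map_map measurable_snd measurable_snd,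
      show (Prod.snd ∘ (Prod.snd : X × X × X → X × X))
        = (Prod.snd ∘ fun q : X × X × X => (q.1, q.2.2)) from rfl,
      ← Measure.map_map measurable_snd hm14, map14, hd2]
    exact h2s
  · have hA : ∫⁻ z : X × X, edist z.1 z.2 ^ p ∂(τ.map Prod.snd)
        = ∫⁻ q : X × X × X, edist q.2.1 q.2.2 ^ p ∂τ :=
      lintegral_map (ShapeAux.cost_measurable p) measurable_snd
    have e1 : ∫⁻ q : X × X × X, edist q.2.1 q.1 ^ p ∂τ
        = ∫⁻ z : X × X, edist z.1 z.2 ^ p ∂π₁ := by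
      have h := lintegral_map (μ := τ) (cost_measurable' p) hm13
      rw [map13, hd1, hρ₁, lintegral_map (cost_measurable' p) measurable_swap] at h
      exact h.symm
    have e2 : ∫⁻ q : X × X × X, edist q.1 q.2.2 ^ p ∂τ
        = ∫⁻ z : X × X, edist z.1 z.2 ^ p ∂π₂ := by
      have h := lintegral_map (μ := τ) (ShapeAux.cost_measurable p) hm14
      rw [map14, hd2] at h
      exact h.symm
    have hmf : Measurable (fun q : X × X × X => edist q.2.1 q.1) := by fun_prop
    have hmg : Measurable (fun q : X × X × X => edist q.1 q.2.2) := by fun_prop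
    calc (∫⁻ z : X × X, edist z.1 z.2 ^ p ∂(τ.map Prod.snd)) ^ (1/p)
        = (∫⁻ q : X × X × X, edist q.2.1 q.2.2 ^ p ∂τ) ^ (1/p) := by rw [hA]
      _ ≤ (∫⁻ q : X × X × X,
            (((fun q : X × X × X => edist q.2.1 q.1)
              + fun q : X × X × X => edist q.1 q.2.2) q) ^ p ∂τ) ^ (1/p) := by
          refine ENNReal.rpow_le_rpow (lintegral_mono fun q => ?_) h1p
          exact ENNReal.rpow_le_rpow (edist_triangle _ _ _) hp0.le
      _ ≤ (∫⁻ q : X × X × X, edist q.2.1 q.1 ^ p ∂τ) ^ (1/p)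
            + (∫⁻ q : X × X × X, edist q.1 q.2.2 ^ p ∂τ) ^ (1/p) :=
          ENNReal.lintegral_Lp_add_le hmf.aemeasurable hmg.aemeasurable hp
      _ = (∫⁻ z : X × X, edist z.1 z.2 ^ p ∂π₁) ^ (1/p)
            + (∫⁻ z : X × X, edist z.1 z.2 ^ p ∂π₂) ^ (1/p) := by rw [e1, e2]

lemma Wp_triangle {p : ℝ} (hp : 1 ≤ p) (μ ν σ : Measure X) (hμ : IsProbabilityMeasure μ)
    (hν : IsProbabilityMeasure ν) (hσ : IsProbabilityMeasure σ) :
    Wp p μ ν ≤ Wp p μ σ + Wp p σ ν := by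
  have hp0 : (0:ℝ) < p := by linarith
  refine ENNReal.le_of_forall_pos_le_add fun ε hε hfin => ?_
  have hμσ : Wp p μ σ ≠ ⊤ := (ne_top_of_lt hfin) |> fun h => (ENNReal.add_ne_top.mp h).1
  have hσν : Wp p σ ν ≠ ⊤ := (ne_top_of_lt hfin) |> fun h => (ENNReal.add_ne_top.mp h).2
  have hε2 : (0:ℝ≥0∞) < (ε:ℝ≥0∞)/2 := by
    simp [ENNReal.div_pos_iff, hε.ne']
  obtain ⟨π₁, hπ₁, hc₁⟩ := ShapeAux.exists_adm_of_lt hp0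
    (ENNReal.lt_add_right hμσ hε2.ne') (μ := μ) (ν := σ)
  obtain ⟨π₂, hπ₂, hc₂⟩ := ShapeAux.exists_adm_of_lt hp0
    (ENNReal.lt_add_right hσν hε2.ne') (μ := σ) (ν := ν)
  obtain ⟨π₀, hπ₀, hc⟩ := glue hσ hπ₁ hπ₂ hp
  calc Wp p μ ν ≤ (∫⁻ z : X × X, edist z.1 z.2 ^ p ∂π₀) ^ (1/p) := ShapeAux.Wp_le_cost hp0 hπ₀
    _ ≤ (Wp p μ σ + ε/2) + (Wp p σ ν + ε/2) := hc.trans (add_le_add hc₁ hc₂)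
    _ = Wp p μ σ + Wp p σ ν + (↑ε/2 + ↑ε/2) := by ring
    _ = Wp p μ σ + Wp p σ ν + ↑ε := by rw [ENNReal.add_halves]

end Gluing

section ZeroLemmas
open EMetric Filter Topology

lemma jensen_lintegral {α : Type*} [MeasurableSpace α] {m : Measure α} [IsProbabilityMeasure m]
    {f : α → ℝ≥0∞} (hf : Measurable f) {p : ℝ} (hp : 1 ≤ p) :
    ∫⁻ a, f a ∂m ≤ (∫⁻ a, f a ^ p ∂m) ^ (1/p) := by
  rcases eq_or_lt_of_le hp with h1 | h1
  · simp [← h1]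
  · have hc := Real.HolderConjugate.conjExponent h1
    have h := ENNReal.lintegral_mul_le_Lp_mul_Lq m hc hf.aemeasurable
      (aemeasurable_const (b := (1:ℝ≥0∞)))
    simpa [ENNReal.one_rpow, lintegral_one, measure_univ] using h

lemma one_sub_le_aux {A B E : ℝ≥0∞} (h : B ≤ A + E) : 1 - A ≤ (1 - B) + E := by
  rw [tsub_le_iff_right]
  calc (1:ℝ≥0∞) ≤ 1 - B + B := le_tsub_add
    _ ≤ 1 - B + (A + E) := by gcongr
    _ = 1 - B + E + A := by ring

variable {X : Type*} [MetricSpace X]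

lemma tIA_lip {δ : ℝ} (F : Set X) (x y : X) :
    thickenedIndicatorAux δ F x
      ≤ thickenedIndicatorAux δ F y + edist x y / ENNReal.ofReal δ := by
  unfold thickenedIndicatorAux
  refine one_sub_le_aux ?_
  calc infEdist y F / ENNReal.ofReal δ
      ≤ (infEdist x F + edist y x) / ENNReal.ofReal δ := by
        gcongr
        exact infEdist_le_infEdist_add_edist
    _ = infEdist x F / ENNReal.ofReal δ + edist x y / ENNReal.ofReal δ := by
        rw [ENNReal.add_div, edist_comm]

variable [SecondCountableTopology X] [MeasurableSpace X] [BorelSpace X]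

lemma tIA_measurable {δ : ℝ} (hδ : 0 < δ) (F : Set X) :
    Measurable (thickenedIndicatorAux δ F) :=
  (continuous_thickenedIndicatorAux hδ F).measurable

lemma lintegral_tIA_le_one {δ : ℝ} (F : Set X) (m : Measure X) [IsProbabilityMeasure m] :
    ∫⁻ x, thickenedIndicatorAux δ F x ∂m ≤ 1 := by
  calc ∫⁻ x, thickenedIndicatorAux δ F x ∂m ≤ ∫⁻ _, 1 ∂m :=
        lintegral_mono (thickenedIndicatorAux_le_one δ F)
    _ = 1 := by simp

lemma lintegral_adm_le {α β : Measure X} {π : Measure (X × X)} (hπ : π ∈ Adm α β)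
    {f : X → ℝ≥0∞} (hf : Measurable f) {C : ℝ≥0∞}
    (hLip : ∀ x y, f x ≤ f y + C * edist x y) {p : ℝ} (hp : 1 ≤ p) :
    ∫⁻ x, f x ∂α ≤ (∫⁻ x, f x ∂β) + C * (∫⁻ z : X × X, edist z.1 z.2 ^ p ∂π) ^ (1/p) := by
  obtain ⟨hprob, hfst, hsnd⟩ := hπ
  haveI := hprob
  have hedist : Measurable fun z : X × X => edist z.1 z.2 := continuous_edist.measurable
  calc ∫⁻ x, f x ∂α = ∫⁻ z : X × X, f z.1 ∂π := by
        rw [← hfst, lintegral_map hf measurable_fst]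
    _ ≤ ∫⁻ z : X × X, (f z.2 + C * edist z.1 z.2) ∂π := lintegral_mono fun z => hLip _ _
    _ = (∫⁻ z : X × X, f z.2 ∂π) + C * ∫⁻ z : X × X, edist z.1 z.2 ∂π := by
        rw [lintegral_add_left (show Measurable fun z : X × X => f z.2 from hf.comp measurable_snd),
          lintegral_const_mul _ hedist]
    _ ≤ (∫⁻ x, f x ∂β) + C * (∫⁻ z : X × X, edist z.1 z.2 ^ p ∂π) ^ (1/p) := by
        gcongr
        · exact le_of_eq (by rw [← hsnd, lintegral_map hf measurable_snd])
        · exact jensen_lintegral hedist hp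

lemma lintegral_le_of_Wp_lt {α β : Measure X} (hα : IsProbabilityMeasure α)
    (hβ : IsProbabilityMeasure β) {f : X → ℝ≥0∞} (hf : Measurable f) {C : ℝ≥0∞}
    (hLip : ∀ x y, f x ≤ f y + C * edist x y) {p : ℝ} (hp : 1 ≤ p) {ε : ℝ≥0∞}
    (hW : Wp p α β < ε) :
    ∫⁻ x, f x ∂α ≤ (∫⁻ x, f x ∂β) + C * ε := by
  obtain ⟨π, hπ, hc⟩ := ShapeAux.exists_adm_of_lt (lt_of_lt_of_le zero_lt_one hp) hW
  exact (lintegral_adm_le hπ hf hLip hp).trans (by gcongr)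

lemma coe_tIA {δ : ℝ} (hδ : 0 < δ) (F : Set X) (x : X) :
    (thickenedIndicator hδ F x : ℝ≥0∞) = thickenedIndicatorAux δ F x := by
  rw [thickenedIndicator.coeFn_eq_comp]
  exact ENNReal.coe_toNNReal thickenedIndicatorAux_lt_top.ne

lemma measure_ext_of_tIA {α β : Measure X} (hα : IsProbabilityMeasure α)
    (hβ : IsProbabilityMeasure β)
    (h : ∀ F : Set X, IsClosed F → ∀ δ : ℝ, 0 < δ →
      ∫⁻ x, thickenedIndicatorAux δ F x ∂α = ∫⁻ x, thickenedIndicatorAux δ F x ∂β) :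
    α = β := by
  haveI := hα; haveI := hβ
  have hclosed : ∀ F : Set X, IsClosed F → α F = β F := by
    intro F hF
    have δs_pos : ∀ n : ℕ, (0:ℝ) < 1 / ((n:ℝ) + 1) := fun n => by positivity
    have δs_lim : Tendsto (fun n : ℕ => 1 / ((n:ℝ) + 1)) atTop (𝓝 0) :=
      tendsto_one_div_add_atTop_nhds_zero_nat
    have h1 := MeasureTheory.tendsto_lintegral_thickenedIndicator_of_isClosed α hF δs_pos δs_lim
    have h2 := MeasureTheory.tendsto_lintegral_thickenedIndicator_of_isClosed β hF δs_pos δs_lim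
    have heq : (fun n : ℕ => ∫⁻ x, (thickenedIndicator (δs_pos n) F x : ℝ≥0∞) ∂α)
        = fun n : ℕ => ∫⁻ x, (thickenedIndicator (δs_pos n) F x : ℝ≥0∞) ∂β := by
      funext n
      simp only [coe_tIA (δs_pos n) F]
      exact h F hF _ (δs_pos n)
    rw [heq] at h1
    exact tendsto_nhds_unique h1 h2
  refine MeasureTheory.ext_of_generate_finite {s : Set X | IsClosed s} ?_ ?_
    (fun s hs => hclosed s hs) ?_
  · exact BorelSpace.measurable_eq.trans borel_eq_generateFrom_isClosed
  · intro s hs t ht _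
    exact IsClosed.inter hs ht
  · simp [measure_univ]

lemma eq_of_forall_Wp_lt {p : ℝ} (hp : 1 ≤ p) {α β : Measure X}
    (hα : IsProbabilityMeasure α) (hβ : IsProbabilityMeasure β)
    (h : ∀ ε : ℝ≥0∞, 0 < ε → Wp p α β < ε) : α = β := by
  haveI := hα; haveI := hβ
  refine measure_ext_of_tIA hα hβ fun F hF δ hδ => ?_
  set C : ℝ≥0∞ := (ENNReal.ofReal δ)⁻¹ with hC
  have hC0 : C ≠ 0 := by simp [hC]
  have hCt : C ≠ ⊤ := by simp [hC, (ENNReal.ofReal_pos.mpr hδ).ne']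
  have hlip : ∀ x y : X, thickenedIndicatorAux δ F x
      ≤ thickenedIndicatorAux δ F y + C * edist x y := by
    intro x y
    have := tIA_lip (δ := δ) F x y
    rwa [ENNReal.div_eq_inv_mul] at this
  have key : ∀ (a b : Measure X), IsProbabilityMeasure a → IsProbabilityMeasure b →
      (∀ ε : ℝ≥0∞, 0 < ε → Wp p a b < ε) →
      ∫⁻ x, thickenedIndicatorAux δ F x ∂a ≤ ∫⁻ x, thickenedIndicatorAux δ F x ∂b := by
    intro a b ha hb hab
    refine ENNReal.le_of_forall_pos_le_add fun ε hε _ => ?_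
    have hε' : (0:ℝ≥0∞) < C⁻¹ * ε := by
      refine ENNReal.mul_pos (by simp [hCt]) (by exact_mod_cast hε.ne')
    have := lintegral_le_of_Wp_lt ha hb (tIA_measurable hδ F) hlip hp (hab _ hε')
    calc ∫⁻ x, thickenedIndicatorAux δ F x ∂a
        ≤ (∫⁻ x, thickenedIndicatorAux δ F x ∂b) + C * (C⁻¹ * ε) := this
      _ = (∫⁻ x, thickenedIndicatorAux δ F x ∂b) + ε := by
          rw [← mul_assoc, ENNReal.mul_inv_cancel hC0 hCt, one_mul]
  refine le_antisymm (key α β hα hβ h) (key β α hβ hα fun ε hε => ?_)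
  rw [ShapeAux.Wp_comm (lt_of_lt_of_le zero_lt_one hp)]
  exact h ε hε

end ZeroLemmas

section Continuity
open EMetric Filter Topology

variable {X : Type*} [MetricSpace X] [SecondCountableTopology X] [MeasurableSpace X]
  [BorelSpace X]

lemma exists_compact_compl_lt [ProperSpace X] (μ : Measure X) [IsProbabilityMeasure μ]
    (x₀ : X) {ε : ℝ≥0∞} (hε : 0 < ε) (hεt : ε ≠ ⊤) :
    ∃ K : Set X, IsCompact K ∧ μ Kᶜ < ε := by
  have hmono : Monotone (fun n : ℕ => Metric.closedBall x₀ n) := fun a b hab =>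
    Metric.closedBall_subset_closedBall (by exact_mod_cast hab)
  have hunion : ⋃ n : ℕ, Metric.closedBall x₀ n = Set.univ := by
    ext x
    simp only [Set.mem_iUnion, Metric.mem_closedBall, Set.mem_univ, iff_true]
    obtain ⟨n, hn⟩ := exists_nat_ge (dist x x₀)
    exact ⟨n, hn⟩
  have htend := tendsto_measure_iUnion_atTop (μ := μ) hmono
  rw [hunion, measure_univ] at htend
  have hlt : (1:ℝ≥0∞) - ε < 1 := ENNReal.sub_lt_self one_ne_top one_ne_zero hε.ne'
  have hev : ∀ᶠ n : ℕ in atTop, (1:ℝ≥0∞) - ε < μ (Metric.closedBall x₀ n) :=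
    htend.eventually (eventually_gt_nhds hlt)
  obtain ⟨n, hn⟩ := hev.exists
  refine ⟨Metric.closedBall x₀ n, isCompact_closedBall _ _, ?_⟩
  rw [prob_compl_eq_one_sub measurableSet_closedBall,
    ENNReal.sub_lt_iff_lt_right (measure_ne_top μ _) prob_le_one]
  calc (1:ℝ≥0∞) ≤ (1 - ε) + ε := le_tsub_add
    _ < μ (Metric.closedBall x₀ n) + ε := ENNReal.add_lt_add_right hεt hn
    _ = ε + μ (Metric.closedBall x₀ n) := add_comm _ _

lemma eventually_uniform_smul {G : Type*} [TopologicalSpace G] [SMul G X]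
    [ContinuousSMul G X] {K : Set X} (hK : IsCompact K) (g : G) {η : ℝ} (hη : 0 < η) :
    ∀ᶠ g' in 𝓝 g, ∀ x ∈ K, dist (g' • x) (g • x) < η := by
  haveI : CompactSpace K := isCompact_iff_compactSpace.mp hK
  let m : C(G × K, X) := ⟨fun q => q.1 • (q.2 : X),
    continuous_smul.comp (continuous_fst.prodMk (continuous_subtype_val.comp continuous_snd))⟩
  have hc : Continuous fun g' : G => m.curry g' := m.curry.continuous
  have ht := hc.tendsto g
  filter_upwards [ht (Metric.ball_mem_nhds (m.curry g) hη)] with g' hg'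
  intro x hx
  calc dist (g' • x) (g • x) = dist (m.curry g' ⟨x, hx⟩) (m.curry g ⟨x, hx⟩) := rfl
    _ ≤ dist (m.curry g') (m.curry g) := ContinuousMap.dist_apply_le_dist _
    _ < η := Metric.mem_ball.mp hg'

lemma lintegral_smul_le_bound {G : Type*} [SMul G X] (μ : Measure X) [IsProbabilityMeasure μ]
    {δ η : ℝ} (hδ : 0 < δ) (F : Set X) {K : Set X} (hKm : MeasurableSet K) (g g' : G)
    (hmg : Measurable fun x : X => g • x) (hmg' : Measurable fun x : X => g' • x)
    (hdist : ∀ x ∈ K, edist (g' • x) (g • x) ≤ ENNReal.ofReal η) :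
    ∫⁻ x, thickenedIndicatorAux δ F (g' • x) ∂μ
      ≤ ∫⁻ x, thickenedIndicatorAux δ F (g • x) ∂μ
        + ENNReal.ofReal η / ENNReal.ofReal δ + μ Kᶜ := by
  have hm : Measurable fun x : X => thickenedIndicatorAux δ F (g • x) :=
    (tIA_measurable hδ F).comp hmg
  have hm' : Measurable fun x : X => thickenedIndicatorAux δ F (g' • x) :=
    (tIA_measurable hδ F).comp hmg'
  calc ∫⁻ x, thickenedIndicatorAux δ F (g' • x) ∂μ
      = (∫⁻ x in K, thickenedIndicatorAux δ F (g' • x) ∂μ)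
        + ∫⁻ x in Kᶜ, thickenedIndicatorAux δ F (g' • x) ∂μ :=
        (lintegral_add_compl _ hKm).symm
    _ ≤ (∫⁻ x in K, (thickenedIndicatorAux δ F (g • x)
          + ENNReal.ofReal η / ENNReal.ofReal δ) ∂μ) + ∫⁻ _ in Kᶜ, 1 ∂μ := by
        refine add_le_add ?_ ?_
        · refine setLIntegral_mono (hm.add measurable_const) fun x hx => ?_
          calc thickenedIndicatorAux δ F (g' • x)
              ≤ thickenedIndicatorAux δ F (g • x)
                + edist (g' • x) (g • x) / ENNReal.ofReal δ := tIA_lip (δ := δ) F _ _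
            _ ≤ thickenedIndicatorAux δ F (g • x)
                + ENNReal.ofReal η / ENNReal.ofReal δ := by gcongr; exact hdist x hx
        · exact lintegral_mono fun x => thickenedIndicatorAux_le_one δ F _
    _ = (∫⁻ x in K, thickenedIndicatorAux δ F (g • x) ∂μ)
          + (ENNReal.ofReal η / ENNReal.ofReal δ) * μ K + μ Kᶜ := by
        rw [lintegral_add_right _ measurable_const, setLIntegral_const, setLIntegral_one]
    _ ≤ (∫⁻ x, thickenedIndicatorAux δ F (g • x) ∂μ)
          + ENNReal.ofReal η / ENNReal.ofReal δ + μ Kᶜ := by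
        gcongr
        · exact Measure.restrict_le_self
        · exact le_of_le_of_eq (mul_le_mul_right prob_le_one _) (mul_one _)

lemma continuous_lintegral_smul {G : Type*} [TopologicalSpace G] [SMul G X]
    [ContinuousSMul G X] [ProperSpace X] [Nonempty X] (μ : Measure X)
    [IsProbabilityMeasure μ] {δ : ℝ} (hδ : 0 < δ) (F : Set X) :
    Continuous fun g : G => ∫⁻ x, thickenedIndicatorAux δ F (g • x) ∂μ := by
  have hmg : ∀ g : G, Measurable fun x : X => g • x := fun g =>
    (continuous_const.smul continuous_id : Continuous fun x : X => g • x).measurable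
  rw [continuous_iff_continuousAt]
  intro g
  have hΦle : ∀ g' : G, (∫⁻ x, thickenedIndicatorAux δ F (g' • x) ∂μ) ≤ 1 := by
    intro g'
    calc ∫⁻ x, thickenedIndicatorAux δ F (g' • x) ∂μ ≤ ∫⁻ _, 1 ∂μ :=
        lintegral_mono (fun x => thickenedIndicatorAux_le_one δ F _)
      _ = 1 := by simp
  rw [ContinuousAt, ENNReal.tendsto_nhds (lt_of_le_of_lt (hΦle g) one_lt_top).ne]
  intro ε hε
  set ε' : ℝ≥0∞ := min ε 1 with hε'
  have hε'0 : 0 < ε' := lt_min hε zero_lt_one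
  have hε't : ε' ≠ ⊤ := (lt_of_le_of_lt (min_le_right _ _) one_lt_top).ne
  have hε'2 : (0:ℝ≥0∞) < ε' / 2 := ENNReal.div_pos hε'0.ne' ofNat_ne_top
  have hε'2t : ε' / 2 ≠ ⊤ := (ENNReal.div_lt_top hε't two_ne_zero).ne
  obtain ⟨x₀⟩ := (inferInstance : Nonempty X)
  obtain ⟨K, hK, hKc⟩ := exists_compact_compl_lt μ x₀ hε'2 hε'2t
  set η : ℝ := δ * (ε' / 2).toReal with hη
  have htpos : 0 < (ε' / 2).toReal := ENNReal.toReal_pos hε'2.ne' hε'2t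
  have hηpos : 0 < η := mul_pos hδ htpos
  have hdiv : ENNReal.ofReal η / ENNReal.ofReal δ = ε' / 2 := by
    rw [hη, ENNReal.ofReal_mul hδ.le, mul_comm, mul_div_assoc,
      ENNReal.div_self (ENNReal.ofReal_pos.mpr hδ).ne' ENNReal.ofReal_ne_top, mul_one,
      ENNReal.ofReal_toReal hε'2t]
  filter_upwards [eventually_uniform_smul hK g hηpos] with g' hg'
  have hdist : ∀ x ∈ K, edist (g' • x) (g • x) ≤ ENNReal.ofReal η := fun x hx => by
    rw [edist_dist]
    exact ENNReal.ofReal_le_ofReal (hg' x hx).le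
  have hdist' : ∀ x ∈ K, edist (g • x) (g' • x) ≤ ENNReal.ofReal η := fun x hx => by
    rw [edist_comm]; exact hdist x hx
  have hb1 := lintegral_smul_le_bound μ hδ F hK.measurableSet g g' (hmg g) (hmg g') hdist
  have hb2 := lintegral_smul_le_bound μ hδ F hK.measurableSet g' g (hmg g') (hmg g) hdist'
  rw [hdiv] at hb1 hb2
  constructor
  · rw [tsub_le_iff_right]
    calc ∫⁻ x, thickenedIndicatorAux δ F (g • x) ∂μ
        ≤ (∫⁻ x, thickenedIndicatorAux δ F (g' • x) ∂μ) + ε' / 2 + μ Kᶜ := hb2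
      _ ≤ (∫⁻ x, thickenedIndicatorAux δ F (g' • x) ∂μ) + ε' / 2 + ε' / 2 := by gcongr
      _ = (∫⁻ x, thickenedIndicatorAux δ F (g' • x) ∂μ) + ε' := by
          rw [add_assoc, ENNReal.add_halves]
      _ ≤ (∫⁻ x, thickenedIndicatorAux δ F (g' • x) ∂μ) + ε := by
          gcongr; exact min_le_left _ _
  · calc ∫⁻ x, thickenedIndicatorAux δ F (g' • x) ∂μ
        ≤ (∫⁻ x, thickenedIndicatorAux δ F (g • x) ∂μ) + ε' / 2 + μ Kᶜ := hb1
      _ ≤ (∫⁻ x, thickenedIndicatorAux δ F (g • x) ∂μ) + ε' / 2 + ε' / 2 := by gcongr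
      _ = (∫⁻ x, thickenedIndicatorAux δ F (g • x) ∂μ) + ε' := by
          rw [add_assoc, ENNReal.add_halves]
      _ ≤ (∫⁻ x, thickenedIndicatorAux δ F (g • x) ∂μ) + ε := by
          gcongr; exact min_le_left _ _

end Continuity

section Proper
open Filter Topology EMetric

variable {X : Type*} [MetricSpace X] [SecondCountableTopology X] [MeasurableSpace X]
  [BorelSpace X] {G : Type*} [Group G] [TopologicalSpace G] [MulAction G X]
  [ContinuousSMul G X]

lemma mem_compact_of_small_Wp
    {μ ν : Measure X} [IsProbabilityMeasure μ] [IsProbabilityMeasure ν]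
    {K K' : Set X} (hK : IsCompact K) (hK' : IsCompact K')
    (hKc : μ Kᶜ ≤ 1/4) (hK'c : ν K'ᶜ ≤ 1/4)
    {p : ℝ} (hp : 1 ≤ p) (g : G)
    (hW : Wp p (μ.map fun x : X => g • x) ν < 1) :
    g ∈ Prod.fst '' ((fun q : G × X => (q.1 • q.2, q.2)) ⁻¹'
      ((Metric.cthickening 4 K') ×ˢ K)) := by
  have hp0 : (0:ℝ) < p := lt_of_lt_of_le zero_lt_one hp
  obtain ⟨π, hπ, hcost'⟩ := ShapeAux.exists_adm_of_lt hp0 hW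
  have hcost : ∫⁻ z : X × X, edist z.1 z.2 ^ p ∂π ≤ 1 := by
    have h := ENNReal.rpow_le_rpow hcost' hp0.le
    rwa [← ENNReal.rpow_mul, one_div, inv_mul_cancel₀ hp0.ne', ENNReal.rpow_one,
      ENNReal.one_rpow] at h
  obtain ⟨hπprob, hπf, hπs⟩ := hπ
  haveI := hπprob
  have hmg : Measurable fun x : X => g • x := (continuous_const_smul g).measurable
  have himg : IsCompact ((fun x : X => g • x) '' K) := hK.image (continuous_const_smul g)
  have hAc : π ((Prod.fst ⁻¹' ((fun x : X => g • x) '' K))ᶜ) ≤ 1/4 := by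
    rw [← Set.preimage_compl,
      ← Measure.map_apply measurable_fst himg.isClosed.measurableSet.compl, hπf,
      Measure.map_apply hmg himg.isClosed.measurableSet.compl]
    refine le_trans (measure_mono ?_) hKc
    intro x hx
    simp only [Set.mem_preimage, Set.mem_compl_iff] at hx ⊢
    exact fun hxK => hx (Set.mem_image_of_mem _ hxK)
  have hBc : π ((Prod.snd ⁻¹' K')ᶜ) ≤ 1/4 := by
    rw [← Set.preimage_compl,
      ← Measure.map_apply measurable_snd hK'.isClosed.measurableSet.compl, hπs]
    exact hK'c
  have hCc : π ({z : X × X | edist z.1 z.2 ≤ 4}ᶜ) ≤ 1/4 := by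
    have hsub : {z : X × X | edist z.1 z.2 ≤ 4}ᶜ
        ⊆ {z : X × X | (4:ℝ≥0∞) ≤ edist z.1 z.2 ^ p} := by
      intro z hz
      simp only [Set.mem_compl_iff, Set.mem_setOf_eq, not_le] at hz
      simp only [Set.mem_setOf_eq]
      calc (4:ℝ≥0∞) = 4 ^ (1:ℝ) := (ENNReal.rpow_one _).symm
        _ ≤ 4 ^ p := ENNReal.rpow_le_rpow_of_exponent_le (by norm_num) hp
        _ ≤ edist z.1 z.2 ^ p := ENNReal.rpow_le_rpow hz.le hp0.le
    have hmark := mul_meas_ge_le_lintegral₀ ((ShapeAux.cost_measurable p).aemeasurable)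
      (μ := π) 4
    have h4 : π {z : X × X | (4:ℝ≥0∞) ≤ edist z.1 z.2 ^ p} ≤ 1/4 := by
      rw [ENNReal.le_div_iff_mul_le (Or.inl (by norm_num)) (Or.inl (by norm_num)), mul_comm]
      exact hmark.trans hcost
    exact (measure_mono hsub).trans h4
  have hne : ((Prod.fst ⁻¹' ((fun x : X => g • x) '' K)) ∩ (Prod.snd ⁻¹' K')
      ∩ {z : X × X | edist z.1 z.2 ≤ 4}).Nonempty := by
    by_contra hemp
    rw [Set.not_nonempty_iff_eq_empty] at hemp
    have huniv : (Set.univ : Set (X × X)) ⊆ (Prod.fst ⁻¹' ((fun x : X => g • x) '' K))ᶜ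
        ∪ (Prod.snd ⁻¹' K')ᶜ ∪ {z : X × X | edist z.1 z.2 ≤ 4}ᶜ := by
      intro z _
      by_contra hzc
      simp only [Set.mem_union, not_or, Set.notMem_compl_iff] at hzc
      exact Set.eq_empty_iff_forall_notMem.mp hemp z ⟨⟨hzc.1.1, hzc.1.2⟩, hzc.2⟩
    have hcontr : (1:ℝ≥0∞) ≤ 3/4 := by
      calc (1:ℝ≥0∞) = π Set.univ := (measure_univ).symm
        _ ≤ π ((Prod.fst ⁻¹' ((fun x : X => g • x) '' K))ᶜ
            ∪ (Prod.snd ⁻¹' K')ᶜ ∪ {z : X × X | edist z.1 z.2 ≤ 4}ᶜ) := measure_mono huniv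
        _ ≤ π ((Prod.fst ⁻¹' ((fun x : X => g • x) '' K))ᶜ ∪ (Prod.snd ⁻¹' K')ᶜ)
            + π ({z : X × X | edist z.1 z.2 ≤ 4}ᶜ) := measure_union_le _ _
        _ ≤ π ((Prod.fst ⁻¹' ((fun x : X => g • x) '' K))ᶜ) + π ((Prod.snd ⁻¹' K')ᶜ)
            + π ({z : X × X | edist z.1 z.2 ≤ 4}ᶜ) := by
            gcongr
            exact measure_union_le _ _
        _ ≤ 1/4 + 1/4 + 1/4 := by gcongr
        _ = 3/4 := by
            rw [ENNReal.div_add_div_same, ENNReal.div_add_div_same]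
            norm_num
    have h34 : (3:ℝ≥0∞)/4 < 1 :=
      (ENNReal.div_lt_iff (Or.inl (by norm_num)) (Or.inl (by norm_num))).mpr (by norm_num)
    exact absurd hcontr h34.not_ge
  obtain ⟨z, ⟨hz1, hz2⟩, hz3⟩ := hne
  obtain ⟨x, hxK, hgx⟩ := hz1
  refine ⟨(g, x), ?_, rfl⟩
  simp only [Set.mem_preimage, Set.mem_prod]
  refine ⟨?_, hxK⟩
  rw [Metric.mem_cthickening_iff]
  have h4 : ENNReal.ofReal (4:ℝ) = (4:ℝ≥0∞) := by norm_num
  rw [h4, show g • x = z.1 from hgx]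
  exact le_trans (infEdist_le_edist_of_mem hz2) hz3

end Proper


open Filter Topology in
/-- If `X` is a proper Polish metric space and `G` a topological group acting continuously,
properly and by isometries on `X`, then the shape distance `D_p` is a metric on the quotient
of `P_p(X)` by `μ ∼ ν ↔ ∃ g, g_#μ = ν`: it is well defined on classes, vanishes on the
diagonal, is symmetric, satisfies the triangle inequality, and `D_p(μ,ν) = 0` implies that
`μ` and `ν` are equivalent. -/
theorem shape_distance_is_metric {X : Type*} [MetricSpace X] [CompleteSpace X]
    [TopologicalSpace.SeparableSpace X] [ProperSpace X] [MeasurableSpace X] [BorelSpace X]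
    (G : Type*) [Group G] [TopologicalSpace G] [IsTopologicalGroup G]
    [MulAction G X] [ContinuousSMul G X]
    (hiso : ∀ g : G, Isometry (fun x : X => g • x))
    (hproper : IsProperMap (fun q : G × X => (q.1 • q.2, q.2)))
    (p : ℝ) (hp : 1 ≤ p) :
    (∀ μ ν : Measure X, IsProbabilityMeasure μ → HasFinitePMoment p μ →
      IsProbabilityMeasure ν → HasFinitePMoment p ν → ∀ g : G,
        DpAct G p (μ.map (fun x : X => g • x)) ν = DpAct G p μ ν ∧
        DpAct G p μ (ν.map (fun x : X => g • x)) = DpAct G p μ ν) ∧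
    (∀ μ : Measure X, IsProbabilityMeasure μ → HasFinitePMoment p μ →
      DpAct G p μ μ = 0) ∧
    (∀ μ ν : Measure X, IsProbabilityMeasure μ → HasFinitePMoment p μ →
      IsProbabilityMeasure ν → HasFinitePMoment p ν →
      DpAct G p μ ν = DpAct G p ν μ) ∧
    (∀ μ ν σ : Measure X, IsProbabilityMeasure μ → HasFinitePMoment p μ →
      IsProbabilityMeasure ν → HasFinitePMoment p ν →
      IsProbabilityMeasure σ → HasFinitePMoment p σ →
      DpAct G p μ ν ≤ DpAct G p μ σ + DpAct G p σ ν) ∧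
    (∀ μ ν : Measure X, IsProbabilityMeasure μ → HasFinitePMoment p μ →
      IsProbabilityMeasure ν → HasFinitePMoment p ν →
      DpAct G p μ ν = 0 → ∃ g : G, μ.map (fun x : X => g • x) = ν) := by
  have hp0 : (0:ℝ) < p := lt_of_lt_of_le zero_lt_one hp
  have hnonempty : ∀ μ : Measure X, IsProbabilityMeasure μ → Nonempty X := by
    intro μ hμ
    by_contra h
    rw [not_nonempty_iff] at h
    have h0 : μ Set.univ = 0 := by
      rw [Set.univ_eq_empty_iff.mpr h]
      exact measure_empty
    rw [measure_univ] at h0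
    exact one_ne_zero h0
  refine ⟨?_, ?_, ?_, ?_, ?_⟩
  · intro μ ν hμ _ hν _ g
    exact ⟨DpAct_map_left hiso hp0 μ ν g, DpAct_map_right hiso hp0 μ ν g⟩
  · intro μ hμ _
    exact DpAct_self hiso hp0 μ hμ
  · intro μ ν _ _ _ _
    exact DpAct_comm hiso hp0 μ ν
  · intro μ ν σ hμ _ hν _ hσ _
    haveI := hμ; haveI := hν; haveI := hσ
    haveI : Nonempty X := hnonempty μ hμ
    have key : ∀ g h : G, DpAct G p μ ν
        ≤ Wp p (μ.map fun x : X => g • x) σ + Wp p (σ.map fun x : X => h • x) ν := by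
      intro g h
      haveI : IsProbabilityMeasure (μ.map fun x : X => (h * g) • x) :=
        Measure.isProbabilityMeasure_map (smul_measurable hiso _).aemeasurable
      haveI : IsProbabilityMeasure (σ.map fun x : X => h • x) :=
        Measure.isProbabilityMeasure_map (smul_measurable hiso _).aemeasurable
      calc DpAct G p μ ν ≤ Wp p (μ.map fun x : X => (h * g) • x) ν := iInf_le _ _
        _ ≤ Wp p (μ.map fun x : X => (h * g) • x) (σ.map fun x : X => h • x)
            + Wp p (σ.map fun x : X => h • x) ν :=
            Wp_triangle hp _ _ _ inferInstance inferInstance inferInstance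
        _ = Wp p (μ.map fun x : X => g • x) σ + Wp p (σ.map fun x : X => h • x) ν := by
            congr 1
            rw [← map_smul_smul hiso μ g h]
            exact Wp_smul_smul hiso hp0 (μ.map fun x : X => g • x) σ h
    calc DpAct G p μ ν
        ≤ ⨅ g : G, ⨅ h : G, (Wp p (μ.map fun x : X => g • x) σ
            + Wp p (σ.map fun x : X => h • x) ν) :=
          le_iInf fun g => le_iInf fun h => key g h
      _ = DpAct G p μ σ + DpAct G p σ ν := by
          unfold DpAct
          rw [ENNReal.iInf_add]
          exact (iInf_congr fun g => ENNReal.add_iInf).symm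
  · intro μ ν hμ _ hν _ hD
    haveI := hμ; haveI := hν
    haveI : Nonempty X := hnonempty μ hμ
    obtain ⟨x₀⟩ := (inferInstance : Nonempty X)
    obtain ⟨K, hK, hKc⟩ := exists_compact_compl_lt μ x₀
      (by norm_num : (0:ℝ≥0∞) < 1/4) (by norm_num)
    obtain ⟨K', hK', hK'c⟩ := exists_compact_compl_lt ν x₀
      (by norm_num : (0:ℝ≥0∞) < 1/4) (by norm_num)
    have hgood : ∀ n : ℕ, ∃ g : G,
        Wp p (μ.map fun x : X => g • x) ν < min ((n:ℝ≥0∞))⁻¹ 1 := by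
      intro n
      have hpos : (0:ℝ≥0∞) < min ((n:ℝ≥0∞))⁻¹ 1 :=
        lt_min (ENNReal.inv_pos.mpr (ENNReal.natCast_ne_top n)) zero_lt_one
      have hlt : DpAct G p μ ν < min ((n:ℝ≥0∞))⁻¹ 1 := by rw [hD]; exact hpos
      unfold DpAct at hlt
      rw [iInf_lt_iff] at hlt
      exact hlt
    choose gs hgs using hgood
    have hLcomp : IsCompact (Prod.fst '' ((fun q : G × X => (q.1 • q.2, q.2)) ⁻¹'
        ((Metric.cthickening 4 K') ×ˢ K))) :=
      (hproper.isCompact_preimage ((hK'.cthickening).prod hK)).image continuous_fst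
    have hgL : ∀ n, gs n ∈ Prod.fst '' ((fun q : G × X => (q.1 • q.2, q.2)) ⁻¹'
        ((Metric.cthickening 4 K') ×ˢ K)) := fun n =>
      mem_compact_of_small_Wp hK hK' hKc.le hK'c.le hp (gs n)
        (lt_of_lt_of_le (hgs n) (min_le_right _ _))
    have hmem : (Prod.fst '' ((fun q : G × X => (q.1 • q.2, q.2)) ⁻¹'
        ((Metric.cthickening 4 K') ×ˢ K))) ∈ Filter.map gs atTop :=
      Filter.mem_map.mpr (Filter.Eventually.of_forall hgL)
    obtain ⟨a, _, hacl⟩ := hLcomp.exists_clusterPt (le_principal_iff.mpr hmem)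
    refine ⟨a, ?_⟩
    have hma : Measurable fun x : X => a • x := (continuous_const_smul a).measurable
    refine measure_ext_of_tIA (Measure.isProbabilityMeasure_map hma.aemeasurable) hν ?_
    intro F hF δ hδ
    set Φ : G → ℝ≥0∞ := fun b => ∫⁻ x, thickenedIndicatorAux δ F (b • x) ∂μ with hΦ
    have hΦcont : Continuous Φ := continuous_lintegral_smul μ hδ F
    set c : ℝ≥0∞ := ∫⁻ x, thickenedIndicatorAux δ F x ∂ν with hc
    set C : ℝ≥0∞ := (ENNReal.ofReal δ)⁻¹ with hC
    have hCt : C ≠ ⊤ := by simp [hC, (ENNReal.ofReal_pos.mpr hδ).ne']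
    have hlip : ∀ x y : X, thickenedIndicatorAux δ F x
        ≤ thickenedIndicatorAux δ F y + C * edist x y := by
      intro x y
      have := tIA_lip (δ := δ) F x y
      rwa [ENNReal.div_eq_inv_mul] at this
    have hbound : ∀ n : ℕ, Φ (gs n) ≤ c + C * ((n:ℝ≥0∞))⁻¹
        ∧ c ≤ Φ (gs n) + C * ((n:ℝ≥0∞))⁻¹ := by
      intro n
      have hmn : Measurable fun x : X => gs n • x := (continuous_const_smul _).measurable
      haveI : IsProbabilityMeasure (μ.map fun x : X => gs n • x) :=
        Measure.isProbabilityMeasure_map hmn.aemeasurable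
      have hWn : Wp p (μ.map fun x : X => gs n • x) ν < ((n:ℝ≥0∞))⁻¹ :=
        lt_of_lt_of_le (hgs n) (min_le_left _ _)
      have hWn' : Wp p ν (μ.map fun x : X => gs n • x) < ((n:ℝ≥0∞))⁻¹ := by
        rwa [ShapeAux.Wp_comm hp0]
      have h1 := lintegral_le_of_Wp_lt inferInstance hν (tIA_measurable hδ F) hlip hp hWn
      have h2 := lintegral_le_of_Wp_lt hν inferInstance (tIA_measurable hδ F) hlip hp hWn'
      rw [lintegral_map (tIA_measurable hδ F) hmn] at h1 h2
      exact ⟨h1, h2⟩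
    have hlim : Tendsto (fun n => Φ (gs n)) atTop (𝓝 c) := by
      have hcle : c ≤ 1 := lintegral_tIA_le_one F ν
      rw [ENNReal.tendsto_nhds (lt_of_le_of_lt hcle one_lt_top).ne]
      intro ε hε
      have htend0 : Tendsto (fun n : ℕ => C * ((n:ℝ≥0∞))⁻¹) atTop (𝓝 0) := by
        have h := ENNReal.Tendsto.const_mul ENNReal.tendsto_inv_nat_nhds_zero
          (Or.inr hCt)
        simpa using h
      filter_upwards [htend0.eventually (gt_mem_nhds hε)] with n hn
      obtain ⟨hu, hl⟩ := hbound n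
      constructor
      · rw [tsub_le_iff_right]
        exact hl.trans (by gcongr)
      · exact hu.trans (by gcongr)
    have hccl : ClusterPt (Φ a) (Filter.map (fun n => Φ (gs n)) atTop) := by
      refine hacl.map hΦcont.continuousAt ?_
      rw [Filter.Tendsto, Filter.map_map]
      exact le_rfl
    have hfin : Φ a = c := eq_of_nhds_neBot (hccl.mono hlim)
    rw [lintegral_map (tIA_measurable hδ F) hma]
    exact hfin

end
end
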